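/- arXiv:1001.5437 — 4 statements merged into one kernel-verified Lean document; each statement's English description precedes it below -/
import Mathlib

section
/- Given 2d+2 distinct real numbers a_1 < a_2 < ... < a_{2d+2}, among the points p_{a_i} = (a_i, a_i^2, ..., a_i^{2d}) on the moment curve in R^{2d} there is, up to scalar, a unique affine dependency, and it can be written as a sum over even-index points equaling a sum over odd-index points with all coefficients positive, each side's coefficients summing to 1. -/
open Finset Polynomial

/-- The point `p_t = (t, t², …, t^D)` on the moment curve in `ℝ^D`. -/
noncomputable def momentPt (D : ℕ) (t : ℝ) : EuclideanSpace ℝ (Fin D) :=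
  WithLp.toLp 2 (fun i => t ^ (i.1 + 1))

/-- `X` intertwines `Y`: `x₀ < y₀ < x₁ < y₁ < ⋯ < x_d < y_d`. -/
def Intw {n : ℕ} {α : Type*} [LT α] (X Y : Fin n → α) : Prop :=
  (∀ i, X i < Y i) ∧ ∀ i j : Fin n, i.1 + 1 = j.1 → Y i < X j

/-- A collection of tuples is non-intertwining if no pair intertwines (in either order). -/
def NonIntw {n : ℕ} {α : Type*} [LT α] (R : Set (Fin n → α)) : Prop :=
  ∀ X ∈ R, ∀ Y ∈ R, ¬ Intw X Y

/-- A separated `(d+1)`-tuple from `{1,…,m}`: increasing with consecutive gaps at least 2. -/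
def SepTuple (d m : ℕ) (A : Fin (d+1) → ℕ) : Prop :=
  (∀ x, 1 ≤ A x ∧ A x ≤ m) ∧ ∀ i j : Fin (d+1), i.1 + 1 = j.1 → A i + 2 ≤ A j

noncomputable def uWt (n : ℕ) (a : Fin n → ℝ) (i : Fin n) : ℝ :=
  (∏ j ∈ Finset.univ.erase i, (a i - a j))⁻¹

lemma coeff_basis_top {n : ℕ} (a : Fin n → ℝ) (ha : Function.Injective a) (i : Fin n) :
    (Lagrange.basis Finset.univ a i).coeff (n - 1) =
      ∏ j ∈ Finset.univ.erase i, (a i - a j)⁻¹ := by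
  have hinj : Set.InjOn a ↑(Finset.univ : Finset (Fin n)) := ha.injOn
  have hdeg := Lagrange.degree_basis hinj (Finset.mem_univ i)
  rw [Finset.card_univ, Fintype.card_fin] at hdeg
  have hnat : (Lagrange.basis Finset.univ a i).natDegree = n - 1 :=
    Polynomial.natDegree_eq_of_degree_eq_some hdeg
  rw [← hnat, Polynomial.coeff_natDegree, Lagrange.basis, Polynomial.leadingCoeff_prod]
  refine Finset.prod_congr rfl fun j hj => ?_
  have hij : a i ≠ a j := fun h => (Finset.mem_erase.mp hj).1 (ha h).symm
  rw [Lagrange.basisDivisor, Polynomial.leadingCoeff_mul, Polynomial.leadingCoeff_C,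
    (Polynomial.monic_X_sub_C _).leadingCoeff, mul_one]

lemma key_sum {n : ℕ} (a : Fin n → ℝ) (ha : Function.Injective a)
    (k : ℕ) (hk : k + 2 ≤ n) :
    ∑ i, uWt n a i * a i ^ k = 0 := by
  have hinj : Set.InjOn a ↑(Finset.univ : Finset (Fin n)) := ha.injOn
  have hdeg : (X ^ k : ℝ[X]).degree < #(Finset.univ : Finset (Fin n)) := by
    rw [Polynomial.degree_X_pow, Finset.card_univ, Fintype.card_fin]
    exact_mod_cast by omega
  have hfe := Lagrange.eq_interpolate hinj hdeg
  have := congrArg (fun p : ℝ[X] => p.coeff (n - 1)) hfe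
  simp only [Lagrange.interpolate_apply, Polynomial.finset_sum_coeff,
    Polynomial.coeff_C_mul, Polynomial.coeff_X_pow, coeff_basis_top a ha] at this
  rw [if_neg (by omega)] at this
  rw [this]
  refine Finset.sum_congr rfl fun i _ => ?_
  rw [uWt, ← Finset.prod_inv_distrib, Polynomial.eval_pow, Polynomial.eval_X, mul_comm]

lemma prod_sign {n : ℕ} (a : Fin n → ℝ) (ha : StrictMono a) (i : Fin n) :
    0 < (-1 : ℝ) ^ (n - 1 - i.1) * ∏ j ∈ Finset.univ.erase i, (a i - a j) := by
  classical
  rw [← Finset.prod_filter_mul_prod_filter_not (Finset.univ.erase i) (fun j => j < i)]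
  have h1 : ((Finset.univ.erase i).filter (fun j => j < i)) = Finset.Iio i := by
    ext j; simp [Finset.mem_Iio, Finset.mem_erase, and_comm]
    exact fun h => ne_of_lt h
  have h2 : ((Finset.univ.erase i).filter (fun j => ¬ j < i)) = Finset.Ioi i := by
    ext j
    simp only [Finset.mem_filter, Finset.mem_erase, Finset.mem_univ, Finset.mem_Ioi,
      true_and, and_true, not_lt]
    constructor
    · rintro ⟨hne, hle⟩; exact lt_of_le_of_ne hle (Ne.symm hne)
    · intro h; exact ⟨ne_of_gt h, le_of_lt h⟩
  rw [h1, h2]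
  have hA : 0 < ∏ j ∈ Finset.Iio i, (a i - a j) := by
    refine Finset.prod_pos fun j hj => ?_
    have := ha (Finset.mem_Iio.mp hj); linarith
  have hB : ∏ j ∈ Finset.Ioi i, (a i - a j) =
      (-1 : ℝ) ^ (n - 1 - i.1) * ∏ j ∈ Finset.Ioi i, (a j - a i) := by
    rw [← Fin.card_Ioi i]
    rw [← Finset.prod_const, ← Finset.prod_mul_distrib]
    exact Finset.prod_congr rfl fun j _ => by ring
  have hC : 0 < ∏ j ∈ Finset.Ioi i, (a j - a i) := by
    refine Finset.prod_pos fun j hj => ?_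
    have := ha (Finset.mem_Ioi.mp hj); linarith
  rw [hB]
  have hsq : ((-1 : ℝ) ^ (n - 1 - i.1)) * ((-1 : ℝ) ^ (n - 1 - i.1)) = 1 := by
    rw [← pow_add]
    exact Even.neg_one_pow ⟨n - 1 - i.1, rfl⟩
  calc (0:ℝ) < (∏ j ∈ Finset.Iio i, (a i - a j)) * ∏ j ∈ Finset.Ioi i, (a j - a i) :=
        mul_pos hA hC
    _ = (-1:ℝ) ^ (n - 1 - i.1) * ((∏ j ∈ Finset.Iio i, (a i - a j)) *
        ((-1:ℝ) ^ (n - 1 - i.1) * ∏ j ∈ Finset.Ioi i, (a j - a i))) := by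
        rw [show ∀ x y p : ℝ, p * (x * (p * y)) = (p * p) * (x * y) from fun x y p => by ring,
          hsq, one_mul]

lemma kernel_unique {n : ℕ} (hn : 2 ≤ n) (a : Fin n → ℝ) (ha : Function.Injective a)
    (w : Fin n → ℝ) (hw : ∀ k, k + 2 ≤ n → ∑ i, w i * a i ^ k = 0)
    (h0 : w ⟨0, by omega⟩ = 0) : w = 0 := by
  classical
  set z : Fin n := ⟨0, by omega⟩
  set s : Finset (Fin n) := Finset.univ.erase z with hs
  have hcard : #s = n - 1 := by
    rw [hs, Finset.card_erase_of_mem (Finset.mem_univ _), Finset.card_univ, Fintype.card_fin]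
  have hinj : Set.InjOn a ↑s := ha.injOn
  funext i
  show w i = 0
  by_cases hiz : i = z
  · rw [hiz]; exact h0
  have his : i ∈ s := Finset.mem_erase.mpr ⟨hiz, Finset.mem_univ _⟩
  set p : ℝ[X] := Lagrange.basis s a i with hp
  have hdeg := Lagrange.degree_basis hinj his
  rw [hcard] at hdeg
  have hnat : p.natDegree = n - 1 - 1 := Polynomial.natDegree_eq_of_degree_eq_some hdeg
  have hnd : p.natDegree < n - 1 := by omega
  have heval : ∀ x : ℝ, p.eval x = ∑ k ∈ Finset.range (n-1), p.coeff k * x ^ k :=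
    fun x => Polynomial.eval_eq_sum_range' hnd x
  have hzero : ∑ j, w j * p.eval (a j) = 0 := by
    calc ∑ j, w j * p.eval (a j)
        = ∑ j, ∑ k ∈ Finset.range (n-1), p.coeff k * (w j * a j ^ k) := by
          refine Finset.sum_congr rfl fun j _ => ?_
          rw [heval, Finset.mul_sum]
          exact Finset.sum_congr rfl fun k _ => by ring
      _ = ∑ k ∈ Finset.range (n-1), p.coeff k * ∑ j, w j * a j ^ k := by
          rw [Finset.sum_comm]
          exact Finset.sum_congr rfl fun k _ => by rw [Finset.mul_sum]
      _ = 0 := by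
          refine Finset.sum_eq_zero fun k hk => ?_
          rw [hw k (by have := Finset.mem_range.mp hk; omega), mul_zero]
  have hsplit : ∑ j, w j * p.eval (a j)
      = w z * p.eval (a z) + ∑ j ∈ s, w j * p.eval (a j) := by
    exact (Finset.add_sum_erase _ _ (Finset.mem_univ z)).symm
  have hss : ∑ j ∈ s, w j * p.eval (a j) = w i := by
    rw [Finset.sum_eq_single i]
    · rw [hp, Lagrange.eval_basis_self hinj his, mul_one]
    · intro j hj hji
      rw [hp, Lagrange.eval_basis_of_ne (Ne.symm hji) hj, mul_zero]
    · intro h; exact absurd his h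
  rw [hsplit, h0, zero_mul, zero_add, hss] at hzero
  exact hzero


/-- Among `2d+2` points on the moment curve in `ℝ^{2d}` there is a unique (up to scalar)
affine dependency, expressible with positive coefficients, the even-indexed and odd-indexed
coefficients each summing to `1`. -/
theorem unique_affine_dependency_on_moment_curve (d : ℕ) (a : Fin (2*d+2) → ℝ)
    (ha : StrictMono a) :
    ∃ c : Fin (2*d+2) → ℝ,
      (∀ i, 0 < c i) ∧
      (∑ i ∈ Finset.univ.filter (fun i : Fin (2*d+2) => Even i.1), c i) = 1 ∧
      (∑ i ∈ Finset.univ.filter (fun i : Fin (2*d+2) => ¬ Even i.1), c i) = 1 ∧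
      (∑ i ∈ Finset.univ.filter (fun i : Fin (2*d+2) => Even i.1), c i • momentPt (2*d) (a i)) =
        (∑ i ∈ Finset.univ.filter (fun i : Fin (2*d+2) => ¬ Even i.1),
          c i • momentPt (2*d) (a i)) ∧
      (∀ w : Fin (2*d+2) → ℝ, (∑ i, w i) = 0 →
        (∑ i, w i • momentPt (2*d) (a i)) = 0 →
        ∃ t : ℝ, ∀ i, w i = t * (if Even i.1 then c i else -(c i))) := by
  have hainj : Function.Injective a := ha.injective
  set u : Fin (2*d+2) → ℝ := uWt (2*d+2) a with hu
  have husign : ∀ i : Fin (2*d+2), if Even i.1 then u i < 0 else 0 < u i := by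
    intro i
    have hp := prod_sign a ha i
    have hlt : i.1 < 2*d+2 := i.isLt
    by_cases he : Even i.1
    · rw [if_pos he]
      obtain ⟨m, hm⟩ := he
      have hodd : Odd (2*d+2 - 1 - i.1) := ⟨d - m, by omega⟩
      rw [hodd.neg_one_pow] at hp
      have : ∏ j ∈ Finset.univ.erase i, (a i - a j) < 0 := by linarith
      rw [hu]; exact inv_lt_zero.mpr this
    · rw [if_neg he]
      obtain ⟨m, hm⟩ := Nat.not_even_iff_odd.mp he
      have heven : Even (2*d+2 - 1 - i.1) := ⟨d - m, by omega⟩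
      rw [heven.neg_one_pow, one_mul] at hp
      rw [hu]; exact inv_pos.mpr hp
  have hksum : ∀ k, k + 2 ≤ 2*d+2 → ∑ i, u i * a i ^ k = 0 :=
    fun k hk => key_sum a hainj k hk
  have hsum0 : ∑ i, u i = 0 := by simpa using hksum 0 (by omega)
  set S : ℝ := ∑ i ∈ Finset.univ.filter (fun i : Fin (2*d+2) => ¬ Even i.1), u i with hS
  have hSpos : 0 < S := by
    refine Finset.sum_pos (fun i hi => ?_) ?_
    · have h := husign i
      rw [if_neg (Finset.mem_filter.mp hi).2] at h
      exact h
    · exact ⟨⟨1, by omega⟩, Finset.mem_filter.mpr ⟨Finset.mem_univ _, by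
        simpa using Nat.not_even_one⟩⟩
  have hS0 : S ≠ 0 := ne_of_gt hSpos
  have hES : ∑ i ∈ Finset.univ.filter (fun i : Fin (2*d+2) => Even i.1), u i = -S := by
    have := Finset.sum_filter_add_sum_filter_not Finset.univ
      (fun i : Fin (2*d+2) => Even i.1) u
    rw [hsum0] at this
    linarith [this]
  set c : Fin (2*d+2) → ℝ := fun i => (if Even i.1 then -(u i) else u i) / S with hc
  have hcval : ∀ i, c i = (if Even i.1 then -(u i) else u i) / S := fun i => rfl
  have hcE : ∀ i : Fin (2*d+2), Even i.1 → c i = -(u i) / S := by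
    intro i hi; rw [hcval, if_pos hi]
  have hcO : ∀ i : Fin (2*d+2), ¬ Even i.1 → c i = u i / S := by
    intro i hi; rw [hcval, if_neg hi]
  have hcsigned : ∀ i : Fin (2*d+2), (if Even i.1 then c i else -(c i)) = -(u i) / S := by
    intro i; by_cases hi : Even i.1
    · rw [if_pos hi, hcE i hi]
    · rw [if_neg hi, hcO i hi, neg_div]
  refine ⟨c, ?_, ?_, ?_, ?_, ?_⟩
  · intro i
    have h := husign i
    by_cases hi : Even i.1
    · rw [if_pos hi] at h; rw [hcE i hi]
      exact div_pos (by linarith) hSpos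
    · rw [if_neg hi] at h; rw [hcO i hi]
      exact div_pos h hSpos
  · rw [Finset.sum_congr rfl (fun i hi => hcE i (Finset.mem_filter.mp hi).2),
      ← Finset.sum_div]
    rw [show ∑ i ∈ Finset.univ.filter (fun i : Fin (2*d+2) => Even i.1), -(u i) = S by
      rw [Finset.sum_neg_distrib, hES, neg_neg]]
    exact div_self hS0
  · rw [Finset.sum_congr rfl (fun i hi => hcO i (Finset.mem_filter.mp hi).2),
      ← Finset.sum_div, ← hS]
    exact div_self hS0
  · have hvec : ∑ i, u i • momentPt (2*d) (a i) = 0 := by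
      apply PiLp.ext
      intro m
      have h1 : EuclideanSpace.proj m (∑ i, u i • momentPt (2*d) (a i))
          = EuclideanSpace.proj m (0 : EuclideanSpace ℝ (Fin (2*d))) := by
        rw [map_sum, map_zero]
        simp only [map_smul, PiLp.proj_apply, smul_eq_mul, momentPt]
        exact hksum (m.1 + 1) (by have := m.isLt; omega)
      simpa only [PiLp.proj_apply] using h1
    have hsplitv := Finset.sum_filter_add_sum_filter_not Finset.univ
      (fun i : Fin (2*d+2) => Even i.1) (fun i => u i • momentPt (2*d) (a i))
    rw [hvec] at hsplitv
    have hneg : ∑ i ∈ Finset.univ.filter (fun i : Fin (2*d+2) => Even i.1),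
        u i • momentPt (2*d) (a i)
        = - ∑ i ∈ Finset.univ.filter (fun i : Fin (2*d+2) => ¬ Even i.1),
            u i • momentPt (2*d) (a i) :=
      eq_neg_of_add_eq_zero_left hsplitv
    calc ∑ i ∈ Finset.univ.filter (fun i : Fin (2*d+2) => Even i.1),
          c i • momentPt (2*d) (a i)
        = ∑ i ∈ Finset.univ.filter (fun i : Fin (2*d+2) => Even i.1),
            S⁻¹ • (-(u i • momentPt (2*d) (a i))) := by
          refine Finset.sum_congr rfl fun i hi => ?_
          rw [hcE i (Finset.mem_filter.mp hi).2, div_eq_inv_mul, mul_smul]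
          rw [neg_smul]
      _ = S⁻¹ • (- ∑ i ∈ Finset.univ.filter (fun i : Fin (2*d+2) => Even i.1),
            u i • momentPt (2*d) (a i)) := by
          rw [← Finset.sum_neg_distrib, Finset.smul_sum]
      _ = S⁻¹ • ∑ i ∈ Finset.univ.filter (fun i : Fin (2*d+2) => ¬ Even i.1),
            u i • momentPt (2*d) (a i) := by rw [hneg, neg_neg]
      _ = ∑ i ∈ Finset.univ.filter (fun i : Fin (2*d+2) => ¬ Even i.1),
            c i • momentPt (2*d) (a i) := by
          rw [Finset.smul_sum]
          refine Finset.sum_congr rfl fun i hi => ?_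
          rw [hcO i (Finset.mem_filter.mp hi).2, div_eq_inv_mul, mul_smul]
  · intro w hw0 hwv
    have hwk : ∀ k, k + 2 ≤ 2*d+2 → ∑ i, w i * a i ^ k = 0 := by
      intro k hk
      rcases Nat.eq_zero_or_pos k with h | h
      · subst h; simpa using hw0
      · have hm : k - 1 < 2*d := by omega
        have h1 := congrArg (EuclideanSpace.proj (⟨k-1, hm⟩ : Fin (2*d))) hwv
        rw [map_sum, map_zero] at h1
        simp only [map_smul, PiLp.proj_apply, smul_eq_mul, momentPt] at h1
        rw [show k - 1 + 1 = k by omega] at h1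
        exact h1
    have hz := husign ⟨0, by omega⟩
    rw [if_pos (by simp)] at hz
    have huz : u ⟨0, by omega⟩ ≠ 0 := ne_of_lt hz
    set t' : ℝ := w ⟨0, by omega⟩ / u ⟨0, by omega⟩ with ht'
    have hw'k : ∀ k, k + 2 ≤ 2*d+2 → ∑ i, (w i - t' * u i) * a i ^ k = 0 := by
      intro k hk
      have h1 := hwk k hk
      have h2 := hksum k hk
      calc ∑ i, (w i - t' * u i) * a i ^ k
          = ∑ i, (w i * a i ^ k - t' * (u i * a i ^ k)) := by
            refine Finset.sum_congr rfl fun i _ => by ring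
        _ = (∑ i, w i * a i ^ k) - t' * ∑ i, u i * a i ^ k := by
            rw [Finset.sum_sub_distrib, Finset.mul_sum]
        _ = 0 := by rw [h1, h2]; ring
    have hw'0 : (fun i => w i - t' * u i) ⟨0, by omega⟩ = 0 := by
      show w _ - t' * u _ = 0
      rw [ht', div_mul_cancel₀ _ huz, sub_self]
    have hker := kernel_unique (by omega) a hainj (fun i => w i - t' * u i) hw'k hw'0
    have hweq : ∀ i, w i = t' * u i := by
      intro i
      have := congrFun hker i
      simp only [Pi.zero_apply] at this
      linarith [this]
    refine ⟨-(S * t'), fun i => ?_⟩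
    rw [hcsigned i, hweq i]
    field_simp
end

section
/- If A = (a_0, a_1, ..., a_{2d}) is a 2d-simplex of a triangulation of C(m,2d), then A contains all points immediately below the d-face e(A) = (a_0, a_2, ..., a_{2d}) consisting of its even-index vertices; moreover, for any other d-face E of A with E ≠ e(A), the points immediately below E lie outside A. -/
open Finset

/-- The vertex of the cyclic polytope `C(m,2d)` with label `i+1`. -/
noncomputable def cycVert (d m : ℕ) (i : Fin m) : EuclideanSpace ℝ (Fin (2*d)) :=
  momentPt (2*d) (i.1 + 1)

/-- The convex hull of the vertices of `C(m,2d)` indexed by a finite set `B`. -/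
noncomputable def cycHull (d m : ℕ) (B : Finset (Fin m)) : Set (EuclideanSpace ℝ (Fin (2*d))) :=
  convexHull ℝ (cycVert d m '' (B : Set (Fin m)))

/-- The cyclic polytope `C(m,2d)`. -/
noncomputable def cycPoly (d m : ℕ) : Set (EuclideanSpace ℝ (Fin (2*d))) :=
  convexHull ℝ (Set.range (cycVert d m))

/-- A triangulation of `C(m,2d)`: a collection of `2d`-simplices on the vertices which
covers the polytope and in which any two simplices meet along a common face. -/
def IsTriang (d m : ℕ) (S : Finset (Finset (Fin m))) : Prop :=
  (∀ B ∈ S, B.card = 2*d+1) ∧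
  (∀ B ∈ S, AffineIndependent ℝ (fun v : B => cycVert d m v)) ∧
  (⋃ B ∈ S, cycHull d m B) = cycPoly d m ∧
  ∀ B₁ ∈ S, ∀ B₂ ∈ S, cycHull d m B₁ ∩ cycHull d m B₂ = cycHull d m (B₁ ∩ B₂)

/-- The upward unit direction (last coordinate) in `ℝ^{2d}`. -/
noncomputable def upDir (d : ℕ) : EuclideanSpace ℝ (Fin (2*d)) :=
  WithLp.toLp 2 (fun j => if j.1 = 2*d - 1 then 1 else 0)

section Lemmas
open Polynomial

lemma lagrange_coeff_sum {n : ℕ} (t : Fin (n+1) → ℝ) (ht : Function.Injective t)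
    (k : ℕ) (hk : k ≤ n) :
    ∑ j, (∏ l ∈ Finset.univ.erase j, (t j - t l))⁻¹ * t j ^ k
      = if k = n then 1 else 0 := by
  have hinj : Set.InjOn t (Finset.univ : Finset (Fin (n+1))) := ht.injOn
  have hcard : (Finset.univ : Finset (Fin (n+1))).card = n + 1 := by simp
  have hdeg : (X ^ k : ℝ[X]).degree < (Finset.univ : Finset (Fin (n+1))).card := by
    rw [degree_X_pow, hcard]
    exact_mod_cast Nat.lt_succ_of_le hk
  have hI := Lagrange.eq_interpolate (s := Finset.univ) (v := t) hinj hdeg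
  have hc := congrArg (fun p : ℝ[X] => p.coeff n) hI
  simp only [Lagrange.interpolate_apply, finset_sum_coeff, coeff_C_mul, coeff_X_pow] at hc
  have hbasis : ∀ j : Fin (n+1), (Lagrange.basis Finset.univ t j).coeff n
      = (∏ l ∈ Finset.univ.erase j, (t j - t l))⁻¹ := by
    intro j
    have hnd : (Lagrange.basis Finset.univ t j).natDegree = n := by
      rw [Lagrange.natDegree_basis hinj (mem_univ j), hcard]; omega
    have h1 := coeff_natDegree (p := Lagrange.basis Finset.univ t j)
    rw [hnd] at h1
    rw [h1]
    have : (Lagrange.basis Finset.univ t j).leadingCoeff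
        = ∏ l ∈ Finset.univ.erase j, (t j - t l)⁻¹ := by
      rw [Lagrange.basis, leadingCoeff_prod]
      refine prod_congr rfl fun l hl => ?_
      rcases mem_erase.mp hl with ⟨hlj, -⟩
      have hne : t j ≠ t l := fun h => hlj.symm (ht h)
      rw [Lagrange.basisDivisor, leadingCoeff_mul, leadingCoeff_C, leadingCoeff_X_sub_C, mul_one]
    rw [this, ← prod_inv_distrib]
  simp only [hbasis, eval_pow, eval_X] at hc
  calc ∑ j, (∏ l ∈ Finset.univ.erase j, (t j - t l))⁻¹ * t j ^ k
      = ∑ j, t j ^ k * (∏ l ∈ Finset.univ.erase j, (t j - t l))⁻¹ :=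
        sum_congr rfl fun j _ => mul_comm _ _
    _ = if n = k then 1 else 0 := hc.symm
    _ = if k = n then 1 else 0 := by simp [eq_comm]

lemma prod_erase_sign {n : ℕ} (t : Fin (n+1) → ℝ) (ht : StrictMono t) (j : Fin (n+1)) :
    0 < (-1 : ℝ)^(n - j.1) * ∏ l ∈ Finset.univ.erase j, (t j - t l) := by
  have hsplit : Finset.univ.erase j = Finset.Iio j ∪ Finset.Ioi j := by
    ext l
    simp only [mem_erase, mem_univ, and_true, mem_union, mem_Iio, mem_Ioi]
    exact ne_iff_lt_or_gt
  have hdisj : Disjoint (Finset.Iio j) (Finset.Ioi j) := by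
    rw [Finset.disjoint_left]
    intro l hl hl'
    exact absurd (mem_Ioi.mp hl') (not_lt_of_gt (mem_Iio.mp hl))
  rw [hsplit, prod_union hdisj]
  have h1 : 0 < ∏ l ∈ Finset.Iio j, (t j - t l) :=
    prod_pos fun l hl => sub_pos.mpr (ht (mem_Iio.mp hl))
  have h2 : ∏ l ∈ Finset.Ioi j, (t j - t l)
      = (-1 : ℝ)^(n - j.1) * ∏ l ∈ Finset.Ioi j, (t l - t j) := by
    rw [prod_congr rfl (fun l _ => show t j - t l = -1 * (t l - t j) by ring),
      prod_mul_distrib, prod_const, Fin.card_Ioi]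
    norm_num
  have h3 : 0 < ∏ l ∈ Finset.Ioi j, (t l - t j) :=
    prod_pos fun l hl => sub_pos.mpr (ht (mem_Ioi.mp hl))
  rw [h2]
  have : ((-1 : ℝ)^(n - j.1))^2 = 1 := by
    rw [← pow_mul, pow_mul']
    simp
  have key : (-1 : ℝ)^(n - j.1) * ((∏ l ∈ Finset.Iio j, (t j - t l)) *
      ((-1 : ℝ)^(n - j.1) * ∏ l ∈ Finset.Ioi j, (t l - t j)))
      = ((-1 : ℝ)^(n - j.1))^2 * ((∏ l ∈ Finset.Iio j, (t j - t l)) *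
        ∏ l ∈ Finset.Ioi j, (t l - t j)) := by ring
  rw [key, this, one_mul]
  exact mul_pos h1 h3

lemma exists_pos_combo {V : Type*} [NormedAddCommGroup V] [NormedSpace ℝ V]
    {n : ℕ} (hn : 0 < n) (p : Fin n → V) (hp : Function.Injective p)
    {x : V} (hx : x ∈ intrinsicInterior ℝ (convexHull ℝ (Set.range p))) :
    ∃ μ : Fin n → ℝ, (∀ i, 0 < μ i) ∧ ∑ i, μ i = 1 ∧ ∑ i, μ i • p i = x := by
  classical
  set S := convexHull ℝ (Set.range p) with hS
  have hxS : x ∈ S := intrinsicInterior_subset hx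
  obtain ⟨y, hy, hyx⟩ := mem_intrinsicInterior.mp hx
  set c : V := ∑ i, (n : ℝ)⁻¹ • p i with hc
  have hsum_inv : ∑ _i : Fin n, (n : ℝ)⁻¹ = 1 := by
    rw [Finset.sum_const, card_univ, Fintype.card_fin, nsmul_eq_mul,
      mul_inv_cancel₀ (by positivity : (n:ℝ) ≠ 0)]
  have hcS : c ∈ S := by
    refine (convex_convexHull ℝ _).sum_mem (fun i _ => by positivity) hsum_inv
      (fun i _ => subset_convexHull ℝ _ ⟨i, rfl⟩)
  have hcA : c ∈ affineSpan ℝ S := subset_affineSpan ℝ S hcS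
  have hxA : x ∈ affineSpan ℝ S := subset_affineSpan ℝ S hxS
  set γ : ℝ → affineSpan ℝ S := fun τ =>
    ⟨AffineMap.lineMap c x τ, AffineMap.lineMap_mem τ hcA hxA⟩ with hγ
  have hγcont : Continuous γ :=
    Continuous.subtype_mk AffineMap.lineMap_continuous _
  have hγ1 : γ 1 = y := by
    apply Subtype.ext
    rw [hγ]
    simp [AffineMap.lineMap_apply_one, hyx]
  have hopen : IsOpen (γ ⁻¹' interior ((↑) ⁻¹' S : Set (affineSpan ℝ S))) :=
    isOpen_interior.preimage hγcont
  have h1mem : (1 : ℝ) ∈ γ ⁻¹' interior ((↑) ⁻¹' S : Set (affineSpan ℝ S)) := by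
    rw [Set.mem_preimage, hγ1]; exact hy
  obtain ⟨ε, hε, hball⟩ := Metric.isOpen_iff.mp hopen 1 h1mem
  set τ : ℝ := 1 + ε / 2 with hτ
  have hτ1 : 1 < τ := by rw [hτ]; linarith
  have hτmem : τ ∈ γ ⁻¹' interior ((↑) ⁻¹' S : Set (affineSpan ℝ S)) := by
    apply hball
    rw [Metric.mem_ball, Real.dist_eq, hτ]
    rw [show 1 + ε/2 - 1 = ε/2 by ring, abs_of_pos (by linarith)]
    linarith
  have hzS : AffineMap.lineMap c x τ ∈ S := by
    have := interior_subset (Set.mem_preimage.mp hτmem)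
    exact this
  -- z = c + τ • (x - c)
  have hz_eq : AffineMap.lineMap c x τ = τ • (x - c) + c := by
    rw [AffineMap.lineMap_apply_module]; module
  -- representation of z as a convex combination
  have hrangeq : S = convexHull ℝ ((Finset.univ.image p : Finset V) : Set V) := by
    rw [hS, Finset.coe_image, Finset.coe_univ, Set.image_univ]
  obtain ⟨w, hw0, hw1, hwz⟩ := Finset.mem_convexHull'.mp (hrangeq ▸ hzS)
  set ρ : Fin n → ℝ := fun i => w (p i) with hρ
  have hρ1 : ∑ i, ρ i = 1 := by
    rw [hρ, ← Finset.sum_image (fun i _ j _ h => hp h), hw1]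
  have hρz : ∑ i, ρ i • p i = τ • (x - c) + c := by
    rw [← hz_eq, hρ, ← hwz]
    exact (Finset.sum_image (g := p) (f := fun y : V => w y • y) (fun i _ j _ h => hp h)).symm
  have hτ0 : (0:ℝ) < τ := by linarith
  refine ⟨fun i => (1 - τ⁻¹) * (n : ℝ)⁻¹ + τ⁻¹ * ρ i, fun i => ?_, ?_, ?_⟩
  · have h1 : 0 < 1 - τ⁻¹ := by
      rw [sub_pos]
      exact inv_lt_one_of_one_lt₀ hτ1
    have h2 : 0 ≤ τ⁻¹ * ρ i := by
      apply mul_nonneg (by positivity)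
      exact hw0 _ (Finset.mem_image.mpr ⟨i, mem_univ i, rfl⟩)
    have : (0:ℝ) < (n:ℝ)⁻¹ := by positivity
    nlinarith
  · rw [Finset.sum_add_distrib, ← Finset.mul_sum, ← Finset.mul_sum, hρ1, hsum_inv]
    ring
  · have expand : ∑ i, ((1 - τ⁻¹) * (n : ℝ)⁻¹ + τ⁻¹ * ρ i) • p i
        = (1 - τ⁻¹) • c + τ⁻¹ • (∑ i, ρ i • p i) := by
      rw [hc, Finset.smul_sum, Finset.smul_sum, ← Finset.sum_add_distrib]
      refine Finset.sum_congr rfl fun i _ => ?_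
      rw [add_smul, smul_smul, smul_smul]
    rw [expand, hρz]
    have hττ : τ⁻¹ * τ = 1 := inv_mul_cancel₀ (ne_of_gt hτ0)
    rw [smul_add, smul_smul, hττ, one_smul]
    module

lemma sum_even_eq {d : ℕ} {M : Type*} [AddCommMonoid M] (f : Fin (2*d+1) → M) :
    ∑ j ∈ Finset.univ.filter (fun j : Fin (2*d+1) => Even j.1), f j
      = ∑ k : Fin (d+1), f ⟨2*k.1, by have := k.2; omega⟩ := by
  refine Finset.sum_nbij' (i := fun j : Fin (2*d+1) => (⟨j.1/2, by have := j.2; omega⟩ : Fin (d+1)))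
    (j := fun k : Fin (d+1) => (⟨2*k.1, by have := k.2; omega⟩ : Fin (2*d+1))) ?_ ?_ ?_ ?_ ?_
  · intro j hj; exact mem_univ _
  · intro k _
    simp only [mem_filter, mem_univ, true_and]
    exact ⟨k.1, by omega⟩
  · intro j hj
    obtain ⟨r, hr⟩ := (mem_filter.mp hj).2
    apply Fin.ext
    simp only [Fin.val_mk]
    omega
  · intro k _
    apply Fin.ext
    simp only [Fin.val_mk]
    omega
  · intro j hj
    obtain ⟨r, hr⟩ := (mem_filter.mp hj).2
    congr 1
    apply Fin.ext
    simp only [Fin.val_mk]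
    omega
lemma euclid_sum_apply {N : ℕ} {ι : Type*} (s : Finset ι)
    (f : ι → EuclideanSpace ℝ (Fin N)) (i : Fin N) :
    (∑ j ∈ s, f j) i = ∑ j ∈ s, f j i := by
  induction s using Finset.cons_induction with
  | empty => rfl
  | cons a s h ih => rw [Finset.sum_cons, Finset.sum_cons, PiLp.add_apply, ih]

end Lemmas

set_option maxHeartbeats 1000000 in
/-- If `A` is a `2d`-simplex of a triangulation of `C(m,2d)`, then `A` contains the points
immediately below its even-index `d`-face `e(A)`, while for any other `d`-face `E ≠ e(A)`
of `A`, the points immediately below `E` lie outside `A`. -/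
theorem below_even_face (d m : ℕ) (hd : 0 < d) (hm : 2*d+1 ≤ m)
    (S : Finset (Finset (Fin m))) (hS : IsTriang d m S)
    (a : Fin (2*d+1) → Fin m) (ha : StrictMono a)
    (haS : Finset.image a Finset.univ ∈ S) :
    (∀ x ∈ intrinsicInterior ℝ (convexHull ℝ (cycVert d m '' (a '' {j | Even j.1}))),
      ∃ ε > (0:ℝ), ∀ δ : ℝ, 0 < δ → δ < ε →
        x - δ • upDir d ∈ cycHull d m (Finset.image a Finset.univ)) ∧
    (∀ E : Finset (Fin (2*d+1)), E.card = d + 1 →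
      E ≠ Finset.univ.filter (fun j : Fin (2*d+1) => Even j.1) →
      ∀ x ∈ intrinsicInterior ℝ (convexHull ℝ (cycVert d m '' (a '' (E : Set (Fin (2*d+1)))))),
      ∃ ε > (0:ℝ), ∀ δ : ℝ, 0 < δ → δ < ε →
        x - δ • upDir d ∉ cycHull d m (Finset.image a Finset.univ)) := by

  classical
  set t : Fin (2*d+1) → ℝ := fun j => ((a j : ℕ) : ℝ) + 1 with ht
  have htmono : StrictMono t := by
    intro j j' h
    have : (a j : ℕ) < (a j' : ℕ) := ha h
    simp only [ht]
    show ((a j : ℕ) : ℝ) + 1 < ((a j' : ℕ) : ℝ) + 1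
    linarith [(Nat.cast_lt (α := ℝ)).mpr this]
  have htinj : Function.Injective t := htmono.injective
  set D : Fin (2*d+1) → ℝ := fun j => ∏ l ∈ Finset.univ.erase j, (t j - t l) with hD
  have hDpos : ∀ j : Fin (2*d+1), Even j.1 → 0 < D j := by
    intro j hj
    have h := prod_erase_sign t htmono j
    have heven : Even (2*d - j.1) := by
      obtain ⟨r, hr⟩ := hj
      have := j.2
      exact ⟨d - r, by omega⟩
    rwa [heven.neg_one_pow, one_mul] at h
  have hDneg : ∀ j : Fin (2*d+1), ¬ Even j.1 → D j < 0 := by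
    intro j hj
    have h := prod_erase_sign t htmono j
    have hodd : Odd (2*d - j.1) := by
      rw [Nat.not_even_iff_odd] at hj
      obtain ⟨r, hr⟩ := hj
      have := j.2
      exact ⟨d - r - 1, by omega⟩
    rw [hodd.neg_one_pow] at h
    linarith
  have hcoord : ∀ (j : Fin (2*d+1)) (i : Fin (2*d)), cycVert d m (a j) i = t j ^ (i.1+1) :=
    fun _ _ => by simp [cycVert, momentPt, ht]
  have hL : ∀ k : ℕ, k ≤ 2*d →
      ∑ j, (D j)⁻¹ * t j ^ k = if k = 2*d then 1 else 0 :=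
    fun k hk => lagrange_coeff_sum t htinj k hk
  have hPinj : Function.Injective (fun j : Fin (2*d+1) => cycVert d m (a j)) := by
    intro j j' h
    have h0 := congrFun (congrArg WithLp.ofLp h) (⟨0, by omega⟩ : Fin (2*d))
    have : t j = t j' := by
      have h1 : t j ^ (0+1) = t j' ^ (0+1) := by
        rw [← hcoord j ⟨0, by omega⟩, ← hcoord j' ⟨0, by omega⟩]
        exact h0
      simpa using h1
    exact htinj this
  constructor
  · -- Part 1
    intro x hx
    set e : Fin (d+1) → Fin (2*d+1) := fun k => ⟨2*k.1, by have := k.2; omega⟩ with he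
    set p : Fin (d+1) → EuclideanSpace ℝ (Fin (2*d)) := fun k => cycVert d m (a (e k)) with hp
    have heinj : Function.Injective e := by
      intro k k' h
      apply Fin.ext
      have := congrArg Fin.val h
      simp only [he, Fin.val_mk] at this
      omega
    have hpinj : Function.Injective p := by
      intro k k' h
      exact heinj (hPinj h)
    have hset : cycVert d m '' (a '' {j | Even j.1}) = Set.range p := by
      ext v
      constructor
      · rintro ⟨w, ⟨j, hj, rfl⟩, rfl⟩
        refine ⟨⟨j.1/2, by have := j.2; omega⟩, ?_⟩
        have hej : e ⟨j.1/2, by have := j.2; omega⟩ = j := by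
          apply Fin.ext
          simp only [he, Fin.val_mk]
          obtain ⟨r, hr⟩ := hj
          omega
        simp only [hp, hej]
      · rintro ⟨k, rfl⟩
        exact ⟨a (e k), ⟨e k, ⟨k.1, by simp [he]; omega⟩, rfl⟩, rfl⟩
    rw [hset] at hx
    obtain ⟨μ, hμpos, hμ1, hμx⟩ := exists_pos_combo (Nat.succ_pos d) p hpinj hx
    set ε : ℝ := Finset.univ.inf' Finset.univ_nonempty (fun k : Fin (d+1) => μ k * D (e k)) with hε
    have hεpos : 0 < ε := by
      rw [hε, Finset.lt_inf'_iff]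
      intro k _
      exact mul_pos (hμpos k) (hDpos (e k) ⟨k.1, by simp [he]; omega⟩)
    refine ⟨ε, hεpos, fun δ hδ0 hδε => ?_⟩
    have hhalf : ∀ j : Fin (2*d+1), j.1/2 < d+1 := fun j => by have := j.2; omega
    set half : Fin (2*d+1) → Fin (d+1) := fun j => ⟨j.1/2, hhalf j⟩ with hhalfdef
    set lam : Fin (2*d+1) → ℝ :=
      fun j => (if Even j.1 then μ (half j) else 0) - δ * (D j)⁻¹
      with hlam
    have hlam_nonneg : ∀ j ∈ Finset.univ, 0 ≤ lam j := by
      intro j _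
      by_cases hEv : Even j.1
      · rw [hlam]
        simp only [if_pos hEv]
        have hDj : 0 < D j := hDpos j hEv
        have hek : e (half j) = j := by
          apply Fin.ext
          simp only [he, hhalfdef, Fin.val_mk]
          obtain ⟨r, hr⟩ := hEv
          omega
        have hle : ε ≤ μ (half j) * D j := by
          have h0 := Finset.inf'_le (f := fun k : Fin (d+1) => μ k * D (e k))
            (mem_univ (half j))
          rw [hek] at h0
          exact h0
        have hlt : δ < μ (half j) * D j := lt_of_lt_of_le hδε hle
        have h2 : δ * (D j)⁻¹ < μ (half j) := by
          rw [← div_eq_mul_inv, div_lt_iff₀ hDj]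
          exact hlt
        linarith
      · rw [hlam]
        simp only [if_neg hEv]
        have hDj : D j < 0 := hDneg j hEv
        have : 0 < δ * (-(D j)⁻¹) := mul_pos hδ0 (by simpa using inv_neg''.mpr hDj)
        linarith
    have hsum_ite : ∑ j : Fin (2*d+1),
        (if Even j.1 then μ (half j) else 0) = 1 := by
      rw [← Finset.sum_filter]
      rw [sum_even_eq (fun j => μ (half j))]
      rw [← hμ1]
      refine Finset.sum_congr rfl fun k _ => ?_
      congr 1
      apply Fin.ext
      simp only [hhalfdef, Fin.val_mk]
      omega
    have hsumD : ∑ j, (D j)⁻¹ = 0 := by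
      have := hL 0 (by omega)
      simp only [pow_zero, mul_one] at this
      rw [this]
      rw [if_neg (by omega)]
    have hlam_sum : ∑ j, lam j = 1 := by
      rw [hlam]
      rw [Finset.sum_sub_distrib, hsum_ite, ← Finset.mul_sum, hsumD, mul_zero, sub_zero]
    have hDsum_vec : ∑ j, (D j)⁻¹ • cycVert d m (a j) = upDir d := by
      ext i
      have happ : (∑ j, (D j)⁻¹ • cycVert d m (a j)) i
          = ∑ j, (D j)⁻¹ * (t j ^ (i.1+1)) := by
        rw [euclid_sum_apply]
        exact Finset.sum_congr rfl fun j _ => by rw [PiLp.smul_apply, smul_eq_mul, hcoord]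
      rw [happ, hL (i.1+1) (by have := i.2; omega)]
      show _ = (if i.1 = 2*d - 1 then (1:ℝ) else 0)
      have := i.2
      by_cases h : i.1 + 1 = 2*d
      · rw [if_pos h, if_pos (by omega)]
      · rw [if_neg h, if_neg (by omega)]
    have hfirst : ∑ j, (if Even j.1 then μ (half j) else 0)
        • cycVert d m (a j) = x := by
      have hsplit : ∀ j : Fin (2*d+1),
          (if Even j.1 then μ (half j) else 0) • cycVert d m (a j)
          = (if Even j.1 then μ (half j) • cycVert d m (a j) else 0) := by
        intro j
        by_cases hEv : Even j.1
        · rw [if_pos hEv, if_pos hEv]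
        · rw [if_neg hEv, if_neg hEv, zero_smul]
      rw [Finset.sum_congr rfl (fun j _ => hsplit j), ← Finset.sum_filter]
      rw [sum_even_eq (fun j => μ (half j) • cycVert d m (a j))]
      rw [← hμx]
      refine Finset.sum_congr rfl fun k _ => ?_
      have hk2 : half ⟨2*k.1, by have := k.2; omega⟩ = k := by
        apply Fin.ext
        simp only [hhalfdef, Fin.val_mk]
        omega
      rw [hk2]
    have hcomb : ∑ j, lam j • cycVert d m (a j) = x - δ • upDir d := by
      rw [hlam]
      have hstep : ∀ j : Fin (2*d+1),
          ((if Even j.1 then μ (half j) else 0) - δ * (D j)⁻¹)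
            • cycVert d m (a j)
          = (if Even j.1 then μ (half j) else 0) • cycVert d m (a j)
            - δ • ((D j)⁻¹ • cycVert d m (a j)) := by
        intro j
        rw [sub_smul, smul_smul]
      rw [Finset.sum_congr rfl (fun j _ => hstep j), Finset.sum_sub_distrib, hfirst,
        ← Finset.smul_sum, hDsum_vec]
    have hmem := (convex_convexHull ℝ (cycVert d m '' ((Finset.image a Finset.univ : Finset (Fin m)) : Set (Fin m)))).sum_mem
      hlam_nonneg hlam_sum
      (fun j _ => subset_convexHull ℝ _ ⟨a j, by simp, rfl⟩)
    rw [hcomb] at hmem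
    exact hmem
  · -- Part 2
    intro E hEcard hEne x hx
    have hcardEven : (Finset.univ.filter (fun j : Fin (2*d+1) => Even j.1)).card = d+1 := by
      rw [Finset.card_eq_sum_ones, sum_even_eq (fun _ => 1), Finset.sum_const]
      simp
    obtain ⟨i, hiEven, hiE⟩ : ∃ i : Fin (2*d+1), Even i.1 ∧ i ∉ E := by
      by_contra h
      push_neg at h
      have hsub : Finset.univ.filter (fun j : Fin (2*d+1) => Even j.1) ⊆ E := by
        intro j hj
        exact h j (mem_filter.mp hj).2
      have := Finset.eq_of_subset_of_card_le hsub (by rw [hEcard, hcardEven])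
      exact hEne this.symm
    set q : Polynomial ℝ := Lagrange.nodal (Finset.univ.erase i) t with hq
    have hq_nd : q.natDegree = 2*d := by
      rw [hq, Lagrange.natDegree_nodal, Finset.card_erase_of_mem (mem_univ i)]
      simp
    have hq_lead : q.coeff (2*d) = 1 := by
      have := (Lagrange.nodal_monic (s := Finset.univ.erase i) (v := t)).coeff_natDegree
      rwa [hq_nd] at this
    set L : EuclideanSpace ℝ (Fin (2*d)) → ℝ :=
      fun y => ∑ k : Fin (2*d), q.coeff (k.1+1) * y k with hLdef
    have hLlin : IsLinearMap ℝ L := by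
      constructor
      · intro y z
        rw [hLdef]
        simp only [PiLp.add_apply]
        rw [← Finset.sum_add_distrib]
        exact Finset.sum_congr rfl fun k _ => by ring
      · intro c y
        rw [hLdef]
        simp only [PiLp.smul_apply, smul_eq_mul, Finset.mul_sum]
        exact Finset.sum_congr rfl fun k _ => by ring
    have hLP : ∀ j : Fin (2*d+1), L (cycVert d m (a j)) = Polynomial.eval (t j) q - q.coeff 0 := by
      intro j
      have heval : Polynomial.eval (t j) q
          = ∑ k ∈ Finset.range (2*d+1), q.coeff k * t j ^ k := by
        rw [Polynomial.eval_eq_sum_range, hq_nd]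
      rw [heval, Finset.sum_range_succ']
      simp only [pow_zero, mul_one]
      rw [add_sub_cancel_right, Finset.sum_range]
      rw [hLdef]
      exact Finset.sum_congr rfl fun k _ => by rw [hcoord]
    have heval0 : ∀ j : Fin (2*d+1), j ≠ i → Polynomial.eval (t j) q = 0 := by
      intro j hji
      exact Lagrange.eval_nodal_at_node (mem_erase.mpr ⟨hji, mem_univ j⟩)
    have hevali : 0 < Polynomial.eval (t i) q := by
      rw [hq, Lagrange.eval_nodal]
      exact hDpos i hiEven
    have hA_half : cycHull d m (Finset.image a Finset.univ) ⊆ {y | -q.coeff 0 ≤ L y} := by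
      apply convexHull_min _ (convex_halfSpace_ge hLlin (-q.coeff 0))
      rintro v ⟨w, hw, rfl⟩
      obtain ⟨j, _, rfl⟩ := Finset.mem_image.mp hw
      rw [Set.mem_setOf_eq, hLP j]
      by_cases hji : j = i
      · subst hji
        linarith [hevali]
      · rw [heval0 j hji]
        simp
    have hxE : L x = -q.coeff 0 := by
      have hx' : x ∈ convexHull ℝ (cycVert d m '' (a '' (E : Set (Fin (2*d+1))))) :=
        intrinsicInterior_subset hx
      have hsub : convexHull ℝ (cycVert d m '' (a '' (E : Set (Fin (2*d+1)))))
          ⊆ {y | L y = -q.coeff 0} := by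
        apply convexHull_min _ (convex_hyperplane hLlin (-q.coeff 0))
        rintro v ⟨w, ⟨j, hjE, rfl⟩, rfl⟩
        rw [Set.mem_setOf_eq, hLP j, heval0 j (fun h => hiE (h ▸ hjE)), zero_sub]
      exact hsub hx'
    have hLu : L (upDir d) = 1 := by
      show ∑ k : Fin (2*d), q.coeff (k.1+1) * upDir d k = 1
      have : ∀ k : Fin (2*d), q.coeff (k.1+1) * upDir d k
          = if k = (⟨2*d-1, by omega⟩ : Fin (2*d)) then q.coeff (k.1+1) else 0 := by
        intro k
        show q.coeff (k.1+1) * (if k.1 = 2*d-1 then (1:ℝ) else 0) = _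
        by_cases h : k = (⟨2*d-1, by omega⟩ : Fin (2*d))
        · rw [if_pos h, if_pos (by rw [h]), mul_one]
        · rw [if_neg h, if_neg (fun hh => h (Fin.ext hh)), mul_zero]
      rw [Finset.sum_congr rfl (fun k _ => this k), Finset.sum_ite_eq' Finset.univ]
      rw [if_pos (mem_univ _)]
      show q.coeff (2*d-1+1) = 1
      rw [show 2*d-1+1 = 2*d by omega, hq_lead]
    refine ⟨1, one_pos, fun δ hδ0 _ hmem => ?_⟩
    have h1 : -q.coeff 0 ≤ L (x - δ • upDir d) := hA_half hmem
    have h2 : L (x - δ • upDir d) = L x - δ * L (upDir d) := by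
      have hxd : x - δ • upDir d = x + (-δ) • upDir d := by module
      rw [hxd, hLlin.1, hLlin.2]
      rw [smul_eq_mul]
      ring
    rw [h2, hxE, hLu] at h1
    linarith
end

section
/- Let A = (a_0,...,a_d) and B = (b_0,...,b_d) be increasing (d+1)-tuples from {1,...,m} with A wr B, and let ℓ = (ℓ_0,...,ℓ_d) be an increasing (d+1)-tuple of non-integer reals. For X a subset of {0,...,d}, let m_X(A,B) be the sorted tuple taking entries a_x for x in X and b_x for x not in X. Then exactly one of the following holds: (1) the alternating sum over all subsets X of {0,...,d} of (-1)^{|X|} I_{m_X(A,B)}(ℓ) equals 0; or (2) d is odd and a_i < ℓ_i < b_i for all i. -/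
open Finset

/-- The increasing enumeration of a finite set with `k` elements (junk value otherwise). -/
noncomputable def sortT {α : Type*} [LinearOrder α] [Inhabited α] (k : ℕ) (F : Finset α) :
    Fin k → α :=
  if h : F.card = k then fun i => (F.orderIsoOfFin h i : α) else fun _ => default

/-- `m_X(A,B)`: the sorted tuple with entries `{a_x : x ∈ X} ∪ {b_x : x ∉ X}`. -/
noncomputable def mXt {α : Type*} [LinearOrder α] [Inhabited α] {d : ℕ}
    (A B : Fin (d+1) → α) (X : Finset (Fin (d+1))) : Fin (d+1) → α :=
  sortT (d+1) (X.image A ∪ Xᶜ.image B)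

/-- The cyclic shift `x ↦ b_{x-1}` with `b_{-1} := b_d`. -/
def shiftB {α : Type*} {d : ℕ} (B : Fin (d+1) → α) : Fin (d+1) → α :=
  fun x => if x.1 = 0 then B (Fin.last d)
    else B ⟨x.1 - 1, lt_of_le_of_lt (Nat.sub_le _ _) x.isLt⟩

/-- `n_X(A,B)`: the sorted tuple with entries `{a_x : x ∈ X} ∪ {b_{x-1} : x ∉ X}`,
where `b_{-1}` is interpreted as `b_d`. -/
noncomputable def nXt {α : Type*} [LinearOrder α] [Inhabited α] {d : ℕ}
    (A B : Fin (d+1) → α) (X : Finset (Fin (d+1))) : Fin (d+1) → α :=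
  sortT (d+1) (X.image A ∪ Xᶜ.image (shiftB B))

open Classical in
/-- `I_C(ℓ)`: the indicator that `C` and `ℓ` intertwine in some order. -/
noncomputable def IoneT {d : ℕ} (C : Fin (d+1) → ℕ) (ℓ : Fin (d+1) → ℝ) : ℤ :=
  if (Intw (fun x => (C x : ℝ)) ℓ ∨ Intw ℓ (fun x => (C x : ℝ))) then 1 else 0

/-- Auxiliary: the alternating-sum/product identity. -/
lemma key_sum' {n : ℕ} (f g : Fin n → ℤ) :
    ∑ X : Finset (Fin n), (-1:ℤ)^X.card * ∏ i, (if i ∈ X then f i else g i)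
      = ∏ i, (g i - f i) := by
  have h1 : ∀ i : Fin n, g i - f i = (-f i) + g i := fun i => by ring
  simp_rw [h1]
  rw [Finset.prod_add, Finset.powerset_univ]
  refine Finset.sum_congr rfl fun X _ => ?_
  have h2 : ∏ i, (if i ∈ X then f i else g i)
      = (∏ i ∈ X, f i) * ∏ i ∈ Finset.univ \ X, g i := by
    calc ∏ i, (if i ∈ X then f i else g i)
        = ∏ i ∈ X ∪ Finset.univ \ X, (if i ∈ X then f i else g i) := by
          rw [Finset.union_sdiff_of_subset (Finset.subset_univ X)]
      _ = (∏ i ∈ X, if i ∈ X then f i else g i) *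
            ∏ i ∈ Finset.univ \ X, (if i ∈ X then f i else g i) :=
          Finset.prod_union Finset.disjoint_sdiff
      _ = (∏ i ∈ X, f i) * ∏ i ∈ Finset.univ \ X, g i := by
          congr 1
          · exact Finset.prod_congr rfl fun i hi => if_pos hi
          · exact Finset.prod_congr rfl fun i hi => if_neg (Finset.mem_sdiff.mp hi).2
  rw [h2]
  have h3 : ∏ i ∈ X, (-f i) = (-1:ℤ)^X.card * ∏ i ∈ X, f i := by
    rw [← Finset.prod_const, ← Finset.prod_mul_distrib]
    simp
  rw [h3, mul_assoc]

/-- Auxiliary: identification of the sorted tuple `m_X(A,B)`. -/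
lemma mXt_eq_choice {d : ℕ} (A B : Fin (d+1) → ℕ) (hab1 : ∀ i, A i < B i)
    (hab2 : ∀ i j : Fin (d+1), i.1 + 1 = j.1 → B i < A j) (X : Finset (Fin (d+1))) :
    mXt A B X = fun x => if x ∈ X then A x else B x := by
  classical
  set C : Fin (d+1) → ℕ := fun x => if x ∈ X then A x else B x with hCdef
  have hmono : StrictMono C := by
    refine (Fin.strictMono_iff_lt_succ).mpr fun i => ?_
    have h1 : (i.castSucc : Fin (d+1)).1 + 1 = (i.succ : Fin (d+1)).1 := by simp
    have hBA : B i.castSucc < A i.succ := hab2 _ _ h1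
    have hle : C i.castSucc ≤ B i.castSucc := by
      by_cases h : i.castSucc ∈ X <;> simp [C, h, (hab1 i.castSucc).le]
    have hge : A i.succ ≤ C i.succ := by
      by_cases h : i.succ ∈ X <;> simp [C, h, (hab1 i.succ).le]
    omega
  have hset : X.image A ∪ Xᶜ.image B = Finset.univ.image C := by
    ext y
    simp only [Finset.mem_union, Finset.mem_image, Finset.mem_compl, Finset.mem_univ, true_and]
    constructor
    · rintro (⟨x, hx, rfl⟩ | ⟨x, hx, rfl⟩)
      · exact ⟨x, by simp [C, hx]⟩
      · exact ⟨x, by simp [C, hx]⟩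
    · rintro ⟨x, rfl⟩
      by_cases h : x ∈ X
      · exact Or.inl ⟨x, h, by simp [C, h]⟩
      · exact Or.inr ⟨x, h, by simp [C, h]⟩
  have hcard : (X.image A ∪ Xᶜ.image B).card = d + 1 := by
    rw [hset, Finset.card_image_of_injective _ hmono.injective, Finset.card_univ,
      Fintype.card_fin]
  have hmem : ∀ x, C x ∈ X.image A ∪ Xᶜ.image B := by
    intro x; rw [hset]; exact Finset.mem_image_of_mem _ (Finset.mem_univ x)
  have huniq := Finset.orderEmbOfFin_unique hcard hmem hmono
  funext i
  show sortT (d+1) (X.image A ∪ Xᶜ.image B) i = C i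
  rw [sortT, dif_pos hcard]
  rw [Finset.coe_orderIsoOfFin_apply]
  exact (congrFun huniq i).symm

/-- For intertwining tuples `A ⋏ B` from `{1,…,m}` and an increasing tuple `ℓ` of
non-integers, exactly one of the following holds: the alternating sum
`∑_{X ⊆ {0,…,d}} (-1)^{|X|} I_{m_X(A,B)}(ℓ)` vanishes, or `d` is odd and
`a_i < ℓ_i < b_i` for all `i`. -/
theorem alternating_sum_on_line (d m : ℕ) (A B : Fin (d+1) → ℕ)
    (hA : SepTuple d m A) (hB : SepTuple d m B) (hAB : Intw A B)
    (L : Fin (d+1) → ℝ) (hL : StrictMono L)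
    (hLni : ∀ x, ∀ z : ℤ, L x ≠ (z : ℝ)) :
    Xor' (∑ X : Finset (Fin (d+1)), (-1 : ℤ)^X.card * IoneT (mXt A B X) L = 0)
      (Odd d ∧ ∀ i, (A i : ℝ) < L i ∧ L i < (B i : ℝ)) := by
  classical
  obtain ⟨hab1, hab2⟩ := hAB
  have hab1R : ∀ i, (A i : ℝ) < (B i : ℝ) := fun i => by exact_mod_cast hab1 i
  have hab2R : ∀ i j : Fin (d+1), i.1 + 1 = j.1 → (B i : ℝ) < (A j : ℝ) :=
    fun i j h => by exact_mod_cast hab2 i j h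
  have hne : ∀ x, ∀ n : ℕ, L x ≠ (n : ℝ) := fun x n h => hLni x (n : ℤ) (by exact_mod_cast h)
  -- the four per-coordinate conditions
  set pa : Fin (d+1) → Prop := fun i =>
    (A i : ℝ) < L i ∧ ∀ k : Fin (d+1), k.1 + 1 = i.1 → L k < (A i : ℝ) with hpa
  set pb : Fin (d+1) → Prop := fun i =>
    (B i : ℝ) < L i ∧ ∀ k : Fin (d+1), k.1 + 1 = i.1 → L k < (B i : ℝ) with hpb
  set qa : Fin (d+1) → Prop := fun i =>
    L i < (A i : ℝ) ∧ ∀ k : Fin (d+1), i.1 + 1 = k.1 → (A i : ℝ) < L k with hqa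
  set qb : Fin (d+1) → Prop := fun i =>
    L i < (B i : ℝ) ∧ ∀ k : Fin (d+1), i.1 + 1 = k.1 → (B i : ℝ) < L k with hqb
  set F1a : Fin (d+1) → ℤ := fun i => if pa i then 1 else 0 with hF1a
  set F1b : Fin (d+1) → ℤ := fun i => if pb i then 1 else 0 with hF1b
  set F2a : Fin (d+1) → ℤ := fun i => if qa i then 1 else 0 with hF2a
  set F2b : Fin (d+1) → ℤ := fun i => if qb i then 1 else 0 with hF2b
  -- rewrite each summand
  have hIone : ∀ X : Finset (Fin (d+1)),
      IoneT (mXt A B X) L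
        = (∏ i, (if i ∈ X then F1a i else F1b i))
          + (∏ i, (if i ∈ X then F2a i else F2b i)) := by
    intro X
    rw [mXt_eq_choice A B hab1 hab2 X]
    set CX : Fin (d+1) → ℝ := fun x => ((if x ∈ X then A x else B x : ℕ) : ℝ) with hCX
    have hCXmem : ∀ x, x ∈ X → CX x = (A x : ℝ) := fun x hx => by simp [CX, hx]
    have hCXnmem : ∀ x, x ∉ X → CX x = (B x : ℝ) := fun x hx => by simp [CX, hx]
    have hP : Intw CX L ↔ ∀ i, (if i ∈ X then pa i else pb i) := by
      constructor
      · rintro ⟨h1, h2⟩ i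
        by_cases hi : i ∈ X
        · rw [if_pos hi]
          exact ⟨(hCXmem i hi) ▸ h1 i, fun k hk => (hCXmem i hi) ▸ h2 k i hk⟩
        · rw [if_neg hi]
          exact ⟨(hCXnmem i hi) ▸ h1 i, fun k hk => (hCXnmem i hi) ▸ h2 k i hk⟩
      · intro h
        constructor
        · intro i
          by_cases hi : i ∈ X
          · have hh := h i; rw [if_pos hi] at hh; rw [hCXmem i hi]; exact hh.1
          · have hh := h i; rw [if_neg hi] at hh; rw [hCXnmem i hi]; exact hh.1
        · intro k j hkj
          by_cases hj : j ∈ X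
          · have hh := h j; rw [if_pos hj] at hh; rw [hCXmem j hj]; exact hh.2 k hkj
          · have hh := h j; rw [if_neg hj] at hh; rw [hCXnmem j hj]; exact hh.2 k hkj
    have hQ : Intw L CX ↔ ∀ i, (if i ∈ X then qa i else qb i) := by
      constructor
      · rintro ⟨h1, h2⟩ i
        by_cases hi : i ∈ X
        · rw [if_pos hi]
          exact ⟨(hCXmem i hi) ▸ h1 i, fun k hk => (hCXmem i hi) ▸ h2 i k hk⟩
        · rw [if_neg hi]
          exact ⟨(hCXnmem i hi) ▸ h1 i, fun k hk => (hCXnmem i hi) ▸ h2 i k hk⟩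
      · intro h
        constructor
        · intro i
          by_cases hi : i ∈ X
          · have hh := h i; rw [if_pos hi] at hh; rw [hCXmem i hi]; exact hh.1
          · have hh := h i; rw [if_neg hi] at hh; rw [hCXnmem i hi]; exact hh.1
        · intro i k hik
          by_cases hi : i ∈ X
          · have hh := h i; rw [if_pos hi] at hh; rw [hCXmem i hi]; exact hh.2 k hik
          · have hh := h i; rw [if_neg hi] at hh; rw [hCXnmem i hi]; exact hh.2 k hik
    have hdisj : ¬(Intw CX L ∧ Intw L CX) := by
      rintro ⟨⟨h1, -⟩, ⟨h2, -⟩⟩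
      exact absurd (h1 0) (not_lt.mpr (h2 0).le)
    have hun : IoneT (fun x => if x ∈ X then A x else B x) L
        = if (Intw CX L ∨ Intw L CX) then (1:ℤ) else 0 := rfl
    have hsplit : IoneT (fun x => if x ∈ X then A x else B x) L
        = (if Intw CX L then (1:ℤ) else 0) + (if Intw L CX then (1:ℤ) else 0) := by
      rw [hun]
      by_cases hP' : Intw CX L <;> by_cases hQ' : Intw L CX
      · exact absurd ⟨hP', hQ'⟩ hdisj
      · rw [if_pos (Or.inl hP'), if_pos hP', if_neg hQ']; norm_num
      · rw [if_pos (Or.inr hQ'), if_neg hP', if_pos hQ']; norm_num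
      · rw [if_neg (fun h => h.elim hP' hQ'), if_neg hP', if_neg hQ']; norm_num
    rw [hsplit]
    congr 1
    · rw [hP]
      rw [show (∏ i, (if i ∈ X then F1a i else F1b i))
          = ∏ i, (if (if i ∈ X then pa i else pb i) then (1:ℤ) else 0) from
        Finset.prod_congr rfl fun i _ => by by_cases hi : i ∈ X <;> simp [F1a, F1b, hi]]
      rw [Finset.prod_boole]
      simp
    · rw [hQ]
      rw [show (∏ i, (if i ∈ X then F2a i else F2b i))
          = ∏ i, (if (if i ∈ X then qa i else qb i) then (1:ℤ) else 0) from
        Finset.prod_congr rfl fun i _ => by by_cases hi : i ∈ X <;> simp [F2a, F2b, hi]]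
      rw [Finset.prod_boole]
      simp
  have hsum : (∑ X : Finset (Fin (d+1)), (-1 : ℤ)^X.card * IoneT (mXt A B X) L)
      = (∏ i, (F1b i - F1a i)) + (∏ i, (F2b i - F2a i)) := by
    rw [← key_sum' F1a F1b, ← key_sum' F2a F2b, ← Finset.sum_add_distrib]
    refine Finset.sum_congr rfl fun X _ => ?_
    rw [hIone X, mul_add]
  by_cases hb : ∀ i, (A i : ℝ) < L i ∧ L i < (B i : ℝ)
  · -- all between
    have hg1 : ∀ i, F1b i - F1a i = -1 := by
      intro i
      have hpai : pa i := ⟨(hb i).1, fun k hk => lt_trans (hb k).2 (hab2R k i hk)⟩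
      have hpbi : ¬ pb i := fun h => absurd (hb i).2 (not_lt.mpr h.1.le)
      rw [show F1b i = 0 from if_neg hpbi, show F1a i = 1 from if_pos hpai]
      norm_num
    have hg2 : ∀ i, F2b i - F2a i = 1 := by
      intro i
      have hqbi : qb i := ⟨(hb i).2, fun k hk => lt_trans (hab2R i k hk) (hb k).1⟩
      have hqai : ¬ qa i := fun h => absurd (hb i).1 (not_lt.mpr h.1.le)
      rw [show F2b i = 1 from if_pos hqbi, show F2a i = 0 from if_neg hqai]
      norm_num
    have hp1 : (∏ i, (F1b i - F1a i)) = (-1:ℤ)^(d+1) := by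
      rw [Finset.prod_congr rfl fun i _ => hg1 i, Finset.prod_const, Finset.card_univ,
        Fintype.card_fin]
    have hp2 : (∏ i, (F2b i - F2a i)) = 1 := by
      rw [Finset.prod_congr rfl fun i _ => hg2 i]; simp
    rw [hp1, hp2] at hsum
    by_cases hodd : Odd d
    · refine Or.inr ⟨⟨hodd, hb⟩, ?_⟩
      rw [hsum, (Odd.add_one hodd).neg_one_pow]
      norm_num
    · refine Or.inl ⟨?_, fun h => hodd h.1⟩
      rw [hsum, (Even.add_one (Nat.not_odd_iff_even.mp hodd)).neg_one_pow]
      norm_num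
  · -- not all between
    set S : Finset (Fin (d+1)) :=
      Finset.univ.filter (fun i => ¬((A i : ℝ) < L i ∧ L i < (B i : ℝ))) with hSdef
    have hnotS : ∀ k, k ∉ S → (A k : ℝ) < L k ∧ L k < (B k : ℝ) := by
      intro k hk
      by_contra h
      exact hk (Finset.mem_filter.mpr ⟨Finset.mem_univ k, h⟩)
    have hSne : S.Nonempty := by
      by_contra h
      rw [Finset.not_nonempty_iff_eq_empty] at h
      exact hb fun i => hnotS i (by simp [h])
    have htri : ∀ i, i ∈ S → (L i < (A i : ℝ) ∨ (B i : ℝ) < L i) := by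
      intro i hi
      have hni := (Finset.mem_filter.mp hi).2
      rcases lt_or_gt_of_ne (hne i (A i)) with h | h
      · exact Or.inl h
      · rcases lt_or_gt_of_ne (hne i (B i)) with h2 | h2
        · exact absurd ⟨h, h2⟩ hni
        · exact Or.inr h2
    -- pattern 1 has a zero factor at the minimum of S
    set i1 := S.min' hSne with hi1
    have hi1S : i1 ∈ S := S.min'_mem hSne
    have hg1 : F1b i1 - F1a i1 = 0 := by
      rcases htri i1 hi1S with hlt | hgt
      · have hpai : ¬ pa i1 := fun h => absurd hlt (not_lt.mpr h.1.le)
        have hpbi : ¬ pb i1 := fun h =>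
          absurd (lt_trans hlt (hab1R i1)) (not_lt.mpr h.1.le)
        rw [show F1b i1 = 0 from if_neg hpbi, show F1a i1 = 0 from if_neg hpai]
        norm_num
      · have hleft : ∀ k : Fin (d+1), k.1 + 1 = i1.1 → L k < (A i1 : ℝ) := by
          intro k hk
          have hklt : k < i1 := by rw [Fin.lt_def]; omega
          have hkS : k ∉ S := fun h => absurd (S.min'_le k h) (not_le.mpr hklt)
          exact lt_trans (hnotS k hkS).2 (hab2R k i1 hk)
        have hpai : pa i1 := ⟨lt_trans (hab1R i1) hgt, hleft⟩
        have hpbi : pb i1 := ⟨hgt, fun k hk => lt_trans (hleft k hk) (hab1R i1)⟩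
        rw [show F1b i1 = 1 from if_pos hpbi, show F1a i1 = 1 from if_pos hpai]
        ring
    -- pattern 2 has a zero factor at the maximum of S
    set i2 := S.max' hSne with hi2
    have hi2S : i2 ∈ S := S.max'_mem hSne
    have hg2 : F2b i2 - F2a i2 = 0 := by
      rcases htri i2 hi2S with hlt | hgt
      · have hright : ∀ k : Fin (d+1), i2.1 + 1 = k.1 → (B i2 : ℝ) < L k := by
          intro k hk
          have hklt : i2 < k := by rw [Fin.lt_def]; omega
          have hkS : k ∉ S := fun h => absurd (S.le_max' k h) (not_le.mpr hklt)
          exact lt_trans (hab2R i2 k hk) (hnotS k hkS).1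
        have hqai : qa i2 := ⟨hlt, fun k hk => lt_trans (hab1R i2) (hright k hk)⟩
        have hqbi : qb i2 := ⟨lt_trans hlt (hab1R i2), hright⟩
        rw [show F2b i2 = 1 from if_pos hqbi, show F2a i2 = 1 from if_pos hqai]
        ring
      · have hqai : ¬ qa i2 := fun h =>
          absurd (lt_trans (hab1R i2) hgt) (not_lt.mpr h.1.le)
        have hqbi : ¬ qb i2 := fun h => absurd hgt (not_lt.mpr h.1.le)
        rw [show F2b i2 = 0 from if_neg hqbi, show F2a i2 = 0 from if_neg hqai]
        norm_num
    have hz1 : (∏ i, (F1b i - F1a i)) = 0 :=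
      Finset.prod_eq_zero (Finset.mem_univ i1) hg1
    have hz2 : (∏ i, (F2b i - F2a i)) = 0 :=
      Finset.prod_eq_zero (Finset.mem_univ i2) hg2
    exact Or.inl ⟨by rw [hsum, hz1, hz2]; ring, fun h => hb h.2⟩
end

section
/- The internal (d+1)-tuples in {1,...,2d+3} can be arranged in a cycle of length 2d+3 such that each tuple intertwines (in some order) exactly the two tuples at maximal distance d+1 from it along the cycle, and the non-intertwining collections of the maximal size d+1 are precisely the sets of d+1 cyclically consecutive tuples. -/
open Finset

/-- An internal `(d+1)`-tuple from `{1,…,m}`: separated and also `i_d + 2 ≤ i_0 + m`. -/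
def InternalTuple (d m : ℕ) (A : Fin (d+1) → ℕ) : Prop :=
  SepTuple d m A ∧ A (Fin.last d) + 2 ≤ A 0 + m

def AA (d v : ℕ) : ℕ :=
  if v = 0 then 1 else if v = 1 then 3 else if v ≤ d+1 then 2 else if v = d+2 then 2 else 1

def BB (d v : ℕ) : ℕ :=
  if v = 0 then d+1 else if v = 1 then d+1 else if v ≤ d+1 then v-1
  else if v = d+2 then d+1 else v-d-2

def tup (d a b : ℕ) : Fin (d+1) → ℕ := fun x => a + 2*x.1 + (if b ≤ x.1 then 1 else 0)

lemma AB_facts (d v : ℕ) (hv : v ≤ 2*d+2) :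
    1 ≤ AA d v ∧ AA d v ≤ 3 ∧ 1 ≤ BB d v ∧ BB d v ≤ d+1 ∧
      (AA d v ≤ 2 ∨ (AA d v = 3 ∧ BB d v = d+1)) := by
  unfold AA BB; split_ifs <;> omega

instance nz23 (d : ℕ) : NeZero (2*d+3) := ⟨by omega⟩

noncomputable def ff (d : ℕ) (i : ZMod (2*d+3)) : Fin (d+1) → ℕ :=
  tup d (AA d i.val) (BB d i.val)

lemma val_le (d : ℕ) (i : ZMod (2*d+3)) : i.val ≤ 2*d+2 := by
  have := ZMod.val_lt i; omega

lemma tup_internal (d a b : ℕ) (ha1 : 1 ≤ a) (hb1 : 1 ≤ b) (hb2 : b ≤ d+1)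
    (ha2 : a ≤ 2 ∨ (a = 3 ∧ b = d+1)) : InternalTuple d (2*d+3) (tup d a b) := by
  refine ⟨⟨fun x => ?_, fun i j hij => ?_⟩, ?_⟩
  · have hx := x.2; simp only [tup]; split_ifs <;> omega
  · have hi := i.2; have hj := j.2; simp only [tup]; split_ifs <;> omega
  · simp only [tup, Fin.last]
    have : (0 : Fin (d+1)).1 = 0 := rfl
    rw [this]
    split_ifs <;> omega

lemma ff_internal (d : ℕ) (i : ZMod (2*d+3)) : InternalTuple d (2*d+3) (ff d i) := by
  obtain ⟨h1, h2, h3, h4, h5⟩ := AB_facts d i.val (val_le d i)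
  exact tup_internal d _ _ h1 h3 h4 (by omega)

lemma internal_exists (d : ℕ) (hd : 0 < d) (A : Fin (d+1) → ℕ)
    (h : InternalTuple d (2*d+3) A) :
    ∃ v : ℕ, v ≤ 2*d+2 ∧ A = tup d (AA d v) (BB d v) := by
  obtain ⟨⟨hbd, hgap⟩, hint⟩ := h
  obtain ⟨A', hfin'⟩ : ∃ A' : ℕ → ℕ, ∀ (n : ℕ) (hn : n < d+1), A ⟨n, hn⟩ = A' n := by
    refine ⟨fun n => A ⟨min n d, by omega⟩, fun n hn => ?_⟩
    congr 1
    simp only [Fin.mk.injEq]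
    omega
  have hgap' : ∀ k, k + 1 ≤ d → A' k + 2 ≤ A' (k+1) := by
    intro k hk
    rw [← hfin' k (by omega), ← hfin' (k+1) (by omega)]
    exact hgap _ _ rfl
  have grow : ∀ k, k ≤ d → ∀ n, n ≤ k → A' n + 2*(k-n) ≤ A' k := by
    intro k
    induction k with
    | zero => intro _ n hn; have : n = 0 := by omega
              subst this; omega
    | succ k ih =>
      intro hk n hn
      rcases eq_or_lt_of_le hn with h' | h'
      · subst h'; omega
      · have h1 := ih (by omega) n (by omega)
        have h2 := hgap' k (by omega)
        omega
  have h0 : 1 ≤ A' 0 := by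
    rw [← hfin' 0 (by omega)]; exact (hbd _).1
  have hd3 : A' d ≤ 2*d+3 := by
    rw [← hfin' d (by omega)]; exact (hbd _).2
  have hlast : A' d + 2 ≤ A' 0 + (2*d+3) := by
    rw [← hfin' d (by omega), ← hfin' 0 (by omega)]
    exact hint
  have up : ∀ x, x ≤ d → A' x ≤ A' 0 + 2*x + 1 := by
    intro x hx
    have h1 := grow d le_rfl x hx
    have h2 := grow d le_rfl 0 (by omega)
    omega
  have low : ∀ x, x ≤ d → A' 0 + 2*x ≤ A' x := by
    intro x hx
    have := grow x hx 0 (by omega)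
    omega
  classical
  obtain ⟨b, hb1, hb2, hchar⟩ :
      ∃ b, 1 ≤ b ∧ b ≤ d+1 ∧ ∀ x, x ≤ d → A' x = A' 0 + 2*x + (if b ≤ x then 1 else 0) := by
    by_cases hex : ∃ n, n ≤ d ∧ A' n = A' 0 + 2*n + 1
    · refine ⟨Nat.find hex, ?_, ?_, ?_⟩
      · rcases Nat.eq_zero_or_pos (Nat.find hex) with h' | h'
        · exfalso; have := Nat.find_spec hex; rw [h'] at this; omega
        · omega
      · have := (Nat.find_spec hex).1; omega
      · intro x hx
        obtain ⟨hfd, hfe⟩ := Nat.find_spec hex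
        split_ifs with hbx
        · have := grow x hx (Nat.find hex) hbx
          have := up x hx
          omega
        · push_neg at hbx
          have hnot := Nat.find_min hex hbx
          have := up x hx
          have := low x hx
          omega
    · push_neg at hex
      refine ⟨d+1, by omega, le_rfl, ?_⟩
      intro x hx
      have := hex x
      have := up x hx
      have := low x hx
      split_ifs <;> omega
  have ha3 : A' 0 ≤ 3 := by
    have := hchar d (le_rfl)
    split_ifs at this <;> omega
  have ha3b : A' 0 = 3 → b = d+1 := by
    intro h3
    have := hchar d le_rfl
    split_ifs at this <;> omega
  obtain ⟨v, hv, hva, hvb⟩ : ∃ v, v ≤ 2*d+2 ∧ AA d v = A' 0 ∧ BB d v = b := by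
    by_cases hbd1 : b = d+1
    · subst hbd1
      rcases (by omega : A' 0 = 1 ∨ A' 0 = 2 ∨ A' 0 = 3) with h' | h' | h'
      · exact ⟨0, by omega, by unfold AA; split_ifs <;> (try contradiction) <;> omega, by unfold BB; split_ifs <;> (try contradiction) <;> omega⟩
      · exact ⟨d+2, by omega, by unfold AA; split_ifs <;> (try contradiction) <;> omega, by unfold BB; split_ifs <;> (try contradiction) <;> omega⟩
      · exact ⟨1, by omega, by unfold AA; split_ifs <;> (try contradiction) <;> omega, by unfold BB; split_ifs <;> (try contradiction) <;> omega⟩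
    · have hble : b ≤ d := by omega
      have hA12 : A' 0 = 1 ∨ A' 0 = 2 := by
        rcases (by omega : A' 0 = 1 ∨ A' 0 = 2 ∨ A' 0 = 3) with h' | h' | h'
        · left; exact h'
        · right; exact h'
        · exact absurd (ha3b h') hbd1
      rcases hA12 with h' | h'
      · exact ⟨b+d+2, by omega, by unfold AA; split_ifs <;> (try contradiction) <;> omega,
          by unfold BB; split_ifs <;> (try contradiction) <;> omega⟩
      · exact ⟨b+1, by omega, by unfold AA; split_ifs <;> (try contradiction) <;> omega,
          by unfold BB; split_ifs <;> (try contradiction) <;> omega⟩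
  refine ⟨v, hv, ?_⟩
  funext x
  have hAx : A x = A' x.1 := by
    conv_lhs => rw [← Fin.eta x x.2]
    exact hfin' x.1 x.2
  rw [hAx]
  simp only [tup, hva, hvb]
  have := hchar x.1 (by have := x.2; omega)
  rw [this]

lemma AABB_inj (d v w : ℕ) (hv : v ≤ 2*d+2) (hw : w ≤ 2*d+2)
    (h1 : AA d v = AA d w) (h2 : BB d v = BB d w) : v = w := by
  unfold AA at h1
  unfold BB at h2
  split_ifs at h1 h2 <;> omega


lemma tup_inj (d a a' b b' : ℕ) (hb1 : 1 ≤ b) (hb2 : b ≤ d+1) (hb1' : 1 ≤ b')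
    (hb2' : b' ≤ d+1) (h : tup d a b = tup d a' b') : a = a' ∧ b = b' := by
  have h0 := congrFun h ⟨0, by omega⟩
  simp only [tup] at h0
  have ha : a = a' := by split_ifs at h0 <;> omega
  refine ⟨ha, ?_⟩
  rcases eq_or_ne b b' with h' | h'
  · exact h'
  · have hmin : min b b' ≤ d := by omega
    have hm := congrFun h ⟨min b b', by omega⟩
    simp only [tup] at hm
    split_ifs at hm <;> omega


lemma intw_tup_iff (d : ℕ) (hd : 0 < d) (a a' b b' : ℕ)
    (hb1 : 1 ≤ b) (hb2 : b ≤ d+1) (hb1' : 1 ≤ b') (hb2' : b' ≤ d+1) :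
    Intw (tup d a b) (tup d a' b') ↔
      ((a' = a+1 ∧ (b' = b ∨ b'+1 = b)) ∨ (a' = a+2 ∧ b = 1 ∧ d ≤ b')) := by
  constructor
  · rintro ⟨h1, h2⟩
    have h1' : ∀ x : ℕ, x ≤ d →
        a + 2*x + (if b ≤ x then 1 else 0) < a' + 2*x + (if b' ≤ x then 1 else 0) := by
      intro x hx; exact h1 ⟨x, by omega⟩
    have h2' : ∀ x : ℕ, x < d →
        a' + 2*x + (if b' ≤ x then 1 else 0) < a + 2*(x+1) + (if b ≤ x+1 then 1 else 0) := by
      intro x hx; exact h2 ⟨x, by omega⟩ ⟨x+1, by omega⟩ rfl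
    have A0 := h1' 0 (by omega)
    have A1 := h2' 0 hd
    have hlow : a < a' := by split_ifs at A0 <;> omega
    have hup : a' ≤ a + 2 := by split_ifs at A1 <;> omega
    rcases (by omega : a' = a + 1 ∨ a' = a + 2) with ha | ha
    · have hb'b : b' ≤ b := by
        by_contra hc; push_neg at hc
        have := h1' b (by omega)
        split_ifs at this <;> omega
      have hkey : b ≤ b' + 1 ∨ d ≤ b' := by
        by_cases hc : b' + 1 ≤ d
        · have := h2' b' (by omega)
          split_ifs at this <;> omega
        · right; omega
      exact Or.inl ⟨ha, by omega⟩
    · have hbone : b = 1 := by split_ifs at A1 <;> omega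
      have hdb' : d ≤ b' := by
        by_contra hc; push_neg at hc
        have := h2' b' (by omega)
        split_ifs at this <;> omega
      exact Or.inr ⟨ha, hbone, hdb'⟩
  · rintro h
    constructor
    · intro x
      have hx := x.2
      simp only [tup]
      rcases h with ⟨ha, hb⟩ | ⟨ha, hbb, hdb'⟩ <;> split_ifs <;> omega
    · intro i j hij
      have hi := i.2
      have hj := j.2
      simp only [tup]
      rcases h with ⟨ha, hb⟩ | ⟨ha, hbb, hdb'⟩ <;> split_ifs <;> omega

lemma ff_inj (d : ℕ) : Function.Injective (ff d) := by
  intro i j h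
  obtain ⟨_, _, hbi1, hbi2, _⟩ := AB_facts d i.val (val_le d i)
  obtain ⟨_, _, hbj1, hbj2, _⟩ := AB_facts d j.val (val_le d j)
  obtain ⟨ha, hb⟩ := tup_inj d _ _ _ _ hbi1 hbi2 hbj1 hbj2 h
  have := AABB_inj d i.val j.val (val_le d i) (val_le d j) ha hb
  exact ZMod.val_injective _ this

lemma ff_range (d : ℕ) (hd : 0 < d) :
    Set.range (ff d) = {A | InternalTuple d (2*d+3) A} := by
  ext A
  constructor
  · rintro ⟨i, rfl⟩; exact ff_internal d i
  · intro hA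
    obtain ⟨v, hv, hAv⟩ := internal_exists d hd A hA
    refine ⟨(v : ZMod (2*d+3)), ?_⟩
    unfold ff
    rw [ZMod.val_cast_of_lt (by omega : v < 2*d+3)]
    exact hAv.symm

lemma zmod_eq_iff (d c : ℕ) (hc : c < 2*d+3) (i j : ZMod (2*d+3)) :
    j = i + (c : ZMod (2*d+3)) ↔ (j.val = i.val + c ∨ j.val + (2*d+3) = i.val + c) := by
  constructor
  · rintro rfl
    rw [ZMod.val_add, ZMod.val_cast_of_lt hc]
    have hi := ZMod.val_lt i
    rcases Nat.lt_or_ge (i.val + c) (2*d+3) with h | h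
    · rw [Nat.mod_eq_of_lt h]; omega
    · rw [Nat.mod_eq_sub_mod h, Nat.mod_eq_of_lt (by omega)]; omega
  · intro h
    have hj : ((j.val : ℕ) : ZMod (2*d+3)) = j := ZMod.natCast_zmod_val j
    have hi : ((i.val : ℕ) : ZMod (2*d+3)) = i := ZMod.natCast_zmod_val i
    rcases h with h | h
    · rw [← hj, h, Nat.cast_add, hi]
    · have h2 := congrArg (fun n : ℕ => (n : ZMod (2*d+3))) h
      have h3 : ((j.val + (2*d+3) : ℕ) : ZMod (2*d+3)) =
          (j.val : ZMod (2*d+3)) + ((2*d+3 : ℕ) : ZMod (2*d+3)) := Nat.cast_add _ _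
      rw [h3, ZMod.natCast_self, add_zero, hj] at h2
      rw [Nat.cast_add, hi] at h2
      exact h2

lemma part3 (d : ℕ) (hd : 0 < d) (i j : ZMod (2*d+3)) :
    (Intw (ff d i) (ff d j) ∨ Intw (ff d j) (ff d i)) ↔
      (j = i + ((d+1 : ℕ) : ZMod (2*d+3)) ∨ i = j + ((d+1 : ℕ) : ZMod (2*d+3))) := by
  obtain ⟨_, _, hbi1, hbi2, _⟩ := AB_facts d i.val (val_le d i)
  obtain ⟨_, _, hbj1, hbj2, _⟩ := AB_facts d j.val (val_le d j)
  rw [zmod_eq_iff d (d+1) (by omega) i j, zmod_eq_iff d (d+1) (by omega) j i]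
  unfold ff
  rw [intw_tup_iff d hd _ _ _ _ hbi1 hbi2 hbj1 hbj2,
      intw_tup_iff d hd _ _ _ _ hbj1 hbj2 hbi1 hbi2]
  have hvi := val_le d i
  have hvj := val_le d j
  unfold AA BB
  split_ifs <;> (try contradiction) <;> omega

lemma cast_small_inj (d : ℕ) {a b : ℕ} (ha : a < 2*d+3) (hb : b < 2*d+3)
    (h : (a : ZMod (2*d+3)) = b) : a = b := by
  have h2 := (ZMod.natCast_eq_natCast_iff a b (2*d+3)).mp h
  unfold Nat.ModEq at h2
  rwa [Nat.mod_eq_of_lt ha, Nat.mod_eq_of_lt hb] at h2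

lemma cast_ne_zero (d : ℕ) {c : ℕ} (h1 : 0 < c) (h2 : c < 2*d+3) :
    (c : ZMod (2*d+3)) ≠ 0 := by
  intro h0
  rw [ZMod.natCast_eq_zero_iff] at h0
  have := Nat.le_of_dvd h1 h0
  omega

lemma cycC (d : ℕ) (S : Finset (ZMod (2*d+3))) (hcard : S.card = d+1)
    (hind : ∀ s ∈ S, s + 1 ∉ S) :
    ∃ y : ZMod (2*d+3), ∀ z, z ∈ S ↔ ∃ k : ℕ, k ≤ d ∧ z = y + ((2*k : ℕ) : ZMod (2*d+3)) := by
  classical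
  have hcardZ : Fintype.card (ZMod (2*d+3)) = 2*d+3 := ZMod.card _
  have hS'card : (S.image (· + (1 : ZMod (2*d+3)))).card = d+1 := by
    rw [Finset.card_image_of_injective _ (add_left_injective 1)]; exact hcard
  have hdisj : Disjoint S (S.image (· + (1 : ZMod (2*d+3)))) := by
    rw [Finset.disjoint_right]
    intro a haS' haS
    rw [Finset.mem_image] at haS'
    obtain ⟨s, hs, rfl⟩ := haS'
    exact hind s hs haS
  have hU : (S ∪ S.image (· + (1 : ZMod (2*d+3)))).card = 2*d+2 := by
    rw [Finset.card_union_of_disjoint hdisj]; omega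
  have hcompl : ((S ∪ S.image (· + (1 : ZMod (2*d+3))))ᶜ).card = 1 := by
    rw [Finset.card_compl, hU, hcardZ]; omega
  obtain ⟨y0, hy0⟩ := Finset.card_eq_one.mp hcompl
  have hy0mem : y0 ∈ (S ∪ S.image (· + (1 : ZMod (2*d+3))))ᶜ := by
    rw [hy0]; exact Finset.mem_singleton_self y0
  rw [Finset.mem_compl, Finset.mem_union] at hy0mem
  push_neg at hy0mem
  obtain ⟨hy0S, hy0S'⟩ := hy0mem
  have hcover : ∀ z : ZMod (2*d+3), z ≠ y0 → z ∈ S ∨ ∃ s ∈ S, z = s + 1 := by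
    intro z hz
    have hzU : z ∈ S ∪ S.image (· + (1 : ZMod (2*d+3))) := by
      by_contra hc
      have h3 : z ∈ (S ∪ S.image (· + (1 : ZMod (2*d+3))))ᶜ := Finset.mem_compl.mpr hc
      rw [hy0] at h3
      exact hz (Finset.mem_singleton.mp h3)
    rcases Finset.mem_union.mp hzU with h | h
    · exact Or.inl h
    · rw [Finset.mem_image] at h
      obtain ⟨s, hs, rfl⟩ := h
      exact Or.inr ⟨s, hs, rfl⟩
  have hchain : ∀ k : ℕ, k ≤ d → y0 + ((2*k+1 : ℕ) : ZMod (2*d+3)) ∈ S := by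
    intro k
    induction k with
    | zero =>
      intro _
      have h1 : y0 + ((2*0+1 : ℕ) : ZMod (2*d+3)) ≠ y0 := by
        intro h
        exact cast_ne_zero d (by omega) (by omega) (add_eq_left.mp h)
      rcases hcover _ h1 with h | ⟨s, hs, hse⟩
      · exact h
      · exfalso
        have he : ((2*0+1 : ℕ) : ZMod (2*d+3)) = 1 := by norm_num
        rw [he] at hse
        have : y0 = s := add_right_cancel hse
        rw [this] at hy0S
        exact hy0S hs
    | succ k ih =>
      intro hk
      have hkS := ih (by omega)
      have hnot : y0 + ((2*k+1 : ℕ) : ZMod (2*d+3)) + 1 ∉ S := hind _ hkS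
      have hz : y0 + ((2*(k+1)+1 : ℕ) : ZMod (2*d+3)) ≠ y0 := by
        intro h
        exact cast_ne_zero d (by omega) (by omega) (add_eq_left.mp h)
      rcases hcover _ hz with h | ⟨s, hs, hse⟩
      · exact h
      · exfalso
        apply hnot
        have he : y0 + ((2*(k+1)+1 : ℕ) : ZMod (2*d+3)) =
            (y0 + ((2*k+1 : ℕ) : ZMod (2*d+3)) + 1) + 1 := by
          push_cast
          ring
        rw [he] at hse
        have : y0 + ((2*k+1 : ℕ) : ZMod (2*d+3)) + 1 = s := add_right_cancel hse
        rw [this]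
        exact hs
  have hginj : Function.Injective
      (fun k : Fin (d+1) => y0 + ((2*k.1+1 : ℕ) : ZMod (2*d+3))) := by
    intro x y h
    simp only [] at h
    have h2 := add_left_cancel h
    have h3 := cast_small_inj d (by have := x.2; omega) (by have := y.2; omega) h2
    exact Fin.ext (by omega)
  have hsub : Finset.image (fun k : Fin (d+1) => y0 + ((2*k.1+1 : ℕ) : ZMod (2*d+3)))
      Finset.univ ⊆ S := by
    intro z hz
    rw [Finset.mem_image] at hz
    obtain ⟨k, _, rfl⟩ := hz
    exact hchain k.1 (by have := k.2; omega)
  have hcardim : (Finset.image (fun k : Fin (d+1) => y0 + ((2*k.1+1 : ℕ) : ZMod (2*d+3)))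
      Finset.univ).card = d+1 := by
    rw [Finset.card_image_of_injective _ hginj, Finset.card_univ, Fintype.card_fin]
  have hSeq : Finset.image (fun k : Fin (d+1) => y0 + ((2*k.1+1 : ℕ) : ZMod (2*d+3)))
      Finset.univ = S :=
    Finset.eq_of_subset_of_card_le hsub (by omega)
  refine ⟨y0 + ((1:ℕ) : ZMod (2*d+3)), fun z => ?_⟩
  constructor
  · intro hz
    rw [← hSeq, Finset.mem_image] at hz
    obtain ⟨k, _, rfl⟩ := hz
    refine ⟨k.1, by have := k.2; omega, ?_⟩
    push_cast
    ring
  · rintro ⟨k, hk, rfl⟩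
    rw [← hSeq, Finset.mem_image]
    refine ⟨⟨k, by omega⟩, Finset.mem_univ _, ?_⟩
    push_cast
    ring

lemma consec_inj (d : ℕ) (i : ZMod (2*d+3)) :
    Function.Injective (fun t : Fin (d+1) => ff d (i + ((t.1 : ℕ) : ZMod (2*d+3)))) := by
  intro t s h
  have h2 := ff_inj d h
  have h3 := add_left_cancel h2
  have h4 := cast_small_inj d (by have := t.2; omega) (by have := s.2; omega) h3
  exact Fin.ext h4

lemma part4 (d : ℕ) (hd : 0 < d) (Y : Set (Fin (d+1) → ℕ)) :
    ((∀ A ∈ Y, InternalTuple d (2*d+3) A) ∧ NonIntw Y ∧ Y.ncard = d + 1) ↔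
      ∃ i : ZMod (2*d+3), Y = Set.range (fun t : Fin (d+1) => ff d (i + ((t.1 : ℕ) : ZMod (2*d+3)))) := by
  constructor
  · rintro ⟨hYint, hYnon, hYcard⟩
    classical
    set T : Finset (ZMod (2*d+3)) := Finset.univ.filter (fun t => ff d t ∈ Y) with hT
    have hTmemY : ∀ t, t ∈ T ↔ ff d t ∈ Y := by
      intro t
      rw [hT, Finset.mem_filter]
      simp only [Finset.mem_univ, true_and]
    have hYT : Y = ff d '' ↑T := by
      ext A
      constructor
      · intro hA
        have hAr : A ∈ Set.range (ff d) := by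
          rw [ff_range d hd]; exact hYint A hA
        obtain ⟨t, rfl⟩ := hAr
        exact ⟨t, Finset.mem_coe.mpr ((hTmemY t).mpr hA), rfl⟩
      · rintro ⟨t, ht, rfl⟩
        exact (hTmemY t).mp (Finset.mem_coe.mp ht)
    have hTcard : T.card = d+1 := by
      have h1 := hYcard
      rw [hYT, Set.ncard_image_of_injective _ (ff_inj d), Set.ncard_coe_finset] at h1
      exact h1
    have hTind : ∀ t ∈ T, t + ((d+1 : ℕ) : ZMod (2*d+3)) ∉ T := by
      intro t ht h2
      have hmem1 : ff d t ∈ Y := (hTmemY t).mp ht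
      have hmem2 : ff d (t + ((d+1:ℕ) : ZMod (2*d+3))) ∈ Y := (hTmemY _).mp h2
      have h3 := (part3 d hd t (t + ((d+1:ℕ) : ZMod (2*d+3)))).mpr (Or.inl rfl)
      rcases h3 with h | h
      · exact hYnon _ hmem1 _ hmem2 h
      · exact hYnon _ hmem2 _ hmem1 h
    -- relabel by multiplying with c2 = -2, the inverse of d+1
    have hc2 : ((d+1:ℕ) : ZMod (2*d+3)) * ((2*d+1 : ℕ) : ZMod (2*d+3)) = 1 := by
      rw [← Nat.cast_mul]
      have h1 : (d+1) * (2*d+1) = d * (2*d+3) + 1 := by ring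
      rw [h1, Nat.cast_add, Nat.cast_mul, ZMod.natCast_self, mul_zero, zero_add, Nat.cast_one]
    have hc2b : ((2*d+1 : ℕ) : ZMod (2*d+3)) * ((d+1:ℕ) : ZMod (2*d+3)) = 1 := by
      rw [mul_comm ((2*d+1 : ℕ) : ZMod (2*d+3)) ((d+1:ℕ) : ZMod (2*d+3))]; exact hc2
    have hc2neg : ((2*d+1 : ℕ) : ZMod (2*d+3)) = -2 := by
      have h0 : ((2*d+1 : ℕ) : ZMod (2*d+3)) + ((2 : ℕ) : ZMod (2*d+3)) = 0 := by
        rw [← Nat.cast_add]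
        have : 2*d+1+2 = 2*d+3 := by ring
        rw [this]
        exact ZMod.natCast_self _
      have h1 := eq_neg_of_add_eq_zero_left h0
      rw [h1]; norm_num
    have hmulinj : Function.Injective (fun t : ZMod (2*d+3) => ((2*d+1 : ℕ) : ZMod (2*d+3)) * t) := by
      intro x y h
      have h2 : ((d+1:ℕ) : ZMod (2*d+3)) * (((2*d+1 : ℕ) : ZMod (2*d+3)) * x) =
          ((d+1:ℕ) : ZMod (2*d+3)) * (((2*d+1 : ℕ) : ZMod (2*d+3)) * y) := congrArg _ h
      rwa [← mul_assoc, hc2, one_mul, ← mul_assoc, hc2, one_mul] at h2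
    set S : Finset (ZMod (2*d+3)) := T.image (fun t => ((2*d+1 : ℕ) : ZMod (2*d+3)) * t) with hS
    have hScard : S.card = d+1 := by
      rw [hS, Finset.card_image_of_injective _ hmulinj]; exact hTcard
    have hSind : ∀ s ∈ S, s + 1 ∉ S := by
      intro s hs hs1
      rw [hS, Finset.mem_image] at hs hs1
      obtain ⟨t, ht, rfl⟩ := hs
      obtain ⟨t', ht', heq⟩ := hs1
      have h5 : t' = t + ((d+1:ℕ) : ZMod (2*d+3)) := by
        have h6 : ((d+1:ℕ) : ZMod (2*d+3)) * (((2*d+1 : ℕ) : ZMod (2*d+3)) * t') =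
            ((d+1:ℕ) : ZMod (2*d+3)) * (((2*d+1 : ℕ) : ZMod (2*d+3)) * t + 1) := congrArg _ heq
        rwa [← mul_assoc, hc2, one_mul, mul_add, ← mul_assoc, hc2, one_mul, mul_one] at h6
      rw [h5] at ht'
      exact hTind t ht ht'
    obtain ⟨y, hy⟩ := cycC d S hScard hSind
    have hTmem : ∀ z, z ∈ T ↔ ((2*d+1 : ℕ) : ZMod (2*d+3)) * z ∈ S := by
      intro z
      constructor
      · intro hz; rw [hS]; exact Finset.mem_image_of_mem _ hz
      · intro hz
        rw [hS, Finset.mem_image] at hz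
        obtain ⟨t, ht, heq⟩ := hz
        rwa [← hmulinj heq]
    have hTchar : ∀ z, z ∈ T ↔
        ∃ k : ℕ, k ≤ d ∧ z = ((d+1:ℕ) : ZMod (2*d+3)) * y - ((k : ℕ) : ZMod (2*d+3)) := by
      intro z
      rw [hTmem z, hy _]
      constructor
      · rintro ⟨k, hk, hke⟩
        refine ⟨k, hk, ?_⟩
        have h6 : ((d+1:ℕ) : ZMod (2*d+3)) * (((2*d+1 : ℕ) : ZMod (2*d+3)) * z) =
            ((d+1:ℕ) : ZMod (2*d+3)) * (y + ((2*k : ℕ) : ZMod (2*d+3))) := congrArg _ hke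
        rw [← mul_assoc, hc2, one_mul] at h6
        rw [h6, mul_add]
        have h7 : ((d+1:ℕ) : ZMod (2*d+3)) * ((2*k : ℕ) : ZMod (2*d+3)) =
            -((k : ℕ) : ZMod (2*d+3)) := by
          rw [← Nat.cast_mul]
          have h8 : (d+1) * (2*k) = k * (2*d+2) := by ring
          have h9 : ((2*d+2 : ℕ) : ZMod (2*d+3)) = -1 := by
            have h0 : ((2*d+2 : ℕ) : ZMod (2*d+3)) + ((1 : ℕ) : ZMod (2*d+3)) = 0 := by
              rw [← Nat.cast_add]
              have : 2*d+2+1 = 2*d+3 := by ring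
              rw [this]; exact ZMod.natCast_self _
            have h1 := eq_neg_of_add_eq_zero_left h0
            rw [h1]; norm_num
          rw [h8, Nat.cast_mul, h9]
          ring
        rw [h7]
        ring
      · rintro ⟨k, hk, rfl⟩
        refine ⟨k, hk, ?_⟩
        rw [mul_sub, ← mul_assoc, hc2b, one_mul, hc2neg]
        push_cast
        ring
    refine ⟨((d+1:ℕ) : ZMod (2*d+3)) * y - ((d : ℕ) : ZMod (2*d+3)), ?_⟩
    rw [hYT]
    ext A
    constructor
    · rintro ⟨z, hzT, rfl⟩
      obtain ⟨k, hk, rfl⟩ := (hTchar z).mp (Finset.mem_coe.mp hzT)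
      refine ⟨⟨d - k, by omega⟩, ?_⟩
      simp only []
      congr 1
      have hcast : ((d - k : ℕ) : ZMod (2*d+3)) = ((d:ℕ) : ZMod (2*d+3)) - ((k:ℕ) : ZMod (2*d+3)) :=
        Nat.cast_sub hk
      rw [hcast]
      ring
    · rintro ⟨t, rfl⟩
      refine ⟨((d+1:ℕ) : ZMod (2*d+3)) * y - ((d : ℕ) : ZMod (2*d+3)) + ((t.1 : ℕ) : ZMod (2*d+3)),
        Finset.mem_coe.mpr ?_, rfl⟩
      rw [hTchar]
      refine ⟨d - t.1, by omega, ?_⟩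
      have hcast : ((d - t.1 : ℕ) : ZMod (2*d+3)) =
          ((d:ℕ) : ZMod (2*d+3)) - ((t.1:ℕ) : ZMod (2*d+3)) :=
        Nat.cast_sub (by have := t.2; omega)
      rw [hcast]
      ring
  · rintro ⟨i, rfl⟩
    refine ⟨?_, ?_, ?_⟩
    · rintro A ⟨t, rfl⟩
      exact ff_internal d _
    · rintro X ⟨t, rfl⟩ Z ⟨s, rfl⟩ hI
      have h3 := (part3 d hd (i + ((t.1:ℕ) : ZMod (2*d+3))) (i + ((s.1:ℕ) : ZMod (2*d+3)))).mp
        (Or.inl hI)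
      rcases h3 with h | h
      · rw [add_assoc] at h
        have h4 := add_left_cancel h
        rw [← Nat.cast_add] at h4
        have h5 := cast_small_inj d (by have := s.2; omega) (by have := t.2; omega) h4
        have := s.2; have := t.2; omega
      · rw [add_assoc] at h
        have h4 := add_left_cancel h
        rw [← Nat.cast_add] at h4
        have h5 := cast_small_inj d (by have := t.2; omega) (by have := s.2; omega) h4
        have := s.2; have := t.2; omega
    · have himg : Set.range (fun t : Fin (d+1) => ff d (i + ((t.1:ℕ) : ZMod (2*d+3)))) =
          (fun t : Fin (d+1) => ff d (i + ((t.1:ℕ) : ZMod (2*d+3)))) '' Set.univ := by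
        rw [Set.image_univ]
      rw [himg, Set.ncard_image_of_injective _ (consec_inj d i), Set.ncard_univ,
        Nat.card_eq_fintype_card, Fintype.card_fin]

/-- The internal `(d+1)`-tuples in `{1,…,2d+3}` form a cycle of length `2d+3` in which each
tuple intertwines exactly the two tuples at maximal distance `d+1`, and the maximal
(size `d+1`) non-intertwining collections are exactly the sets of `d+1` consecutive tuples. -/
theorem internal_tuples_cycle (d : ℕ) (hd : 0 < d) :
    ∃ f : ZMod (2*d+3) → (Fin (d+1) → ℕ),
      Function.Injective f ∧
      Set.range f = {A | InternalTuple d (2*d+3) A} ∧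
      (∀ i j : ZMod (2*d+3),
        (Intw (f i) (f j) ∨ Intw (f j) (f i)) ↔
          (j = i + (d+1 : ℕ) ∨ i = j + (d+1 : ℕ))) ∧
      (∀ Y : Set (Fin (d+1) → ℕ),
        ((∀ A ∈ Y, InternalTuple d (2*d+3) A) ∧ NonIntw Y ∧ Y.ncard = d + 1) ↔
          ∃ i : ZMod (2*d+3), Y = Set.range (fun t : Fin (d+1) => f (i + (t.1 : ℕ)))) := by
  exact ⟨ff d, ff_inj d, ff_range d hd, fun i j => part3 d hd i j, fun Y => part4 d hd Y⟩
end
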